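/- arXiv:1411.3791 — 3 statements merged into one kernel-verified Lean document; each statement's English description precedes it below -/
import Mathlib

section
/- Given a well-formed choreography H, the testing consonance relation — C ⊗^r_test H iff NF(C \\ (I(C) − I(⟦H⟧_r))) ⪯_test NF(⟦H⟧_r) — is a conformance relation: for every role r_i of H there exists a contract C_i with C_i ⊗^{r_i}_test H (namely the projection itself), and whenever C_1 ⊗^{r_1}_test H, …, C_n ⊗^{r_n}_test H for all roles r_1,…,r_n of H, the system [C_1]_{r_1} || … || [C_n]_{r_n} implements H. -/
/-!
Formalization of choreographies, orchestrations and behavioural contracts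
following Bravetti–Zavattaro, "Choreographies and Behavioural Contracts on
the Way to Dynamic Updates".
-/

/-- Action names (a denumerable set). -/
abbrev AName := ℕ
/-- Roles. -/
abbrev Role := ℕ

/-! ### The choreography calculus -/

/-- Choreographies, including the auxiliary terms `one` (successful completion)
and `zero` (halt). -/
inductive Chor : Type
  | comm : AName → Role → Role → Chor      -- a_{r→s}
  | choice : Chor → Chor → Chor
  | seq : Chor → Chor → Chor
  | par : Chor → Chor → Chor
  | star : Chor → Chor
  | one : Chor
  | zero : Chor
  deriving DecidableEq

/-- Labels of the choreography semantics: interactions `a_{r→s}` and `√`. -/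
inductive CLabel : Type
  | comm : AName → Role → Role → CLabel
  | tick : CLabel
  deriving DecidableEq

/-- Operational semantics of choreographies. -/
inductive CStep : Chor → CLabel → Chor → Prop
  | comm : CStep (.comm a r s) (.comm a r s) .one
  | one : CStep .one .tick .zero
  | starTick : CStep (.star H) .tick .zero
  | choiceL : CStep H η H' → CStep (.choice H L) η H'
  | choiceR : CStep L η L' → CStep (.choice H L) η L'
  | seqL : CStep H η H' → η ≠ .tick → CStep (.seq H L) η (.seq H' L)
  | seqTick : CStep H .tick H' → CStep L η L' → CStep (.seq H L) η L'
  | parL : CStep H η H' → η ≠ .tick → CStep (.par H L) η (.par H' L)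
  | parR : CStep L η L' → η ≠ .tick → CStep (.par H L) η (.par H L')
  | parTick : CStep H .tick H' → CStep L .tick L' → CStep (.par H L) .tick (.par H' L')
  | starStep : CStep H η H' → η ≠ .tick → CStep (.star H) η (.seq H' (.star H))

/-- Roles syntactically occurring in a choreography. -/
def rolesC : Chor → Finset Role
  | .comm _ r s => {r, s}
  | .choice H L | .seq H L | .par H L => rolesC H ∪ rolesC L
  | .star H => rolesC H
  | .one | .zero => ∅

/-- Action names syntactically occurring in a choreography. -/
def namesC : Chor → Finset AName
  | .comm a _ _ => {a}
  | .choice H L | .seq H L | .par H L => namesC H ∪ namesC L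
  | .star H => namesC H
  | .one | .zero => ∅

/-! ### The orchestration calculus -/

/-- Orchestrations (also used as behavioural contract terms). -/
inductive Orc : Type
  | zero : Orc
  | one : Orc
  | tau : Orc
  | inp : AName → Orc              -- receive a
  | out : AName → Role → Orc       -- invoke ā directed to role l
  | seq : Orc → Orc → Orc
  | choice : Orc → Orc → Orc
  | par : Orc → Orc → Orc
  | star : Orc → Orc
  deriving DecidableEq

/-- Labels of the orchestration/contract semantics. -/
inductive OLabel : Type
  | tau : OLabel
  | inp : AName → OLabel
  | out : AName → Role → OLabel
  | tick : OLabel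
  deriving DecidableEq

/-- Operational semantics of orchestrations/contracts. -/
inductive OStep : Orc → OLabel → Orc → Prop
  | one : OStep .one .tick .zero
  | tau : OStep .tau .tau .one
  | inp : OStep (.inp a) (.inp a) .one
  | out : OStep (.out a l) (.out a l) .one
  | choiceL : OStep C μ C' → OStep (.choice C D) μ C'
  | choiceR : OStep D μ D' → OStep (.choice C D) μ D'
  | seqL : OStep C μ C' → μ ≠ .tick → OStep (.seq C D) μ (.seq C' D)
  | seqTick : OStep C .tick C' → OStep D μ D' → OStep (.seq C D) μ D'
  | parL : OStep C μ C' → μ ≠ .tick → OStep (.par C D) μ (.par C' D)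
  | parR : OStep D μ D' → μ ≠ .tick → OStep (.par C D) μ (.par C D')
  | parTick : OStep C .tick C' → OStep D .tick D' → OStep (.par C D) .tick (.par C' D')
  | starTick : OStep (.star C) .tick .zero
  | starStep : OStep C μ C' → μ ≠ .tick → OStep (.star C) μ (.seq C' (.star C))

/-! ### Systems (compositions of located orchestrations/contracts) -/

/-- Systems: parallel compositions of located orchestrations `[C]_l`. -/
inductive Sys : Type
  | atom : Orc → Role → Sys
  | par : Sys → Sys → Sys
  deriving DecidableEq

/-- Labels of the system semantics. -/
inductive SLabel : Type
  | tau : SLabel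
  | inp : AName → Role → SLabel            -- a_s
  | out : AName → Role → Role → SLabel     -- ā_{r s}
  | comm : AName → Role → Role → SLabel    -- a_{r→s}
  | tick : SLabel
  deriving DecidableEq

/-- Operational semantics of systems. -/
inductive SStep : Sys → SLabel → Sys → Prop
  | atomTau : OStep C .tau C' → SStep (.atom C r) .tau (.atom C' r)
  | atomInp : OStep C (.inp a) C' → SStep (.atom C r) (.inp a r) (.atom C' r)
  | atomOut : OStep C (.out a s) C' → SStep (.atom C r) (.out a r s) (.atom C' r)
  | atomTick : OStep C .tick C' → SStep (.atom C r) .tick (.atom C' r)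
  | parL : SStep P μ P' → μ ≠ .tick → SStep (.par P Q) μ (.par P' Q)
  | parR : SStep Q μ Q' → μ ≠ .tick → SStep (.par P Q) μ (.par P Q')
  | commLR : SStep P (.out a r s) P' → SStep Q (.inp a s) Q' →
      SStep (.par P Q) (.comm a r s) (.par P' Q')
  | commRL : SStep P (.inp a s) P' → SStep Q (.out a r s) Q' →
      SStep (.par P Q) (.comm a r s) (.par P' Q')
  | parTick : SStep P .tick P' → SStep Q .tick Q' → SStep (.par P Q) .tick (.par P' Q')

/-- One step of a completely specified system: an internal `τ` step or a
completed interaction `a_{r→s}`. -/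
def CompleteStep (P P' : Sys) : Prop :=
  SStep P .tau P' ∨ ∃ a r s, SStep P (.comm a r s) P'

/-- Reachability through complete (τ / completed-interaction) steps. -/
inductive Reach : Sys → Sys → Prop
  | refl (P) : Reach P P
  | step : CompleteStep P P' → Reach P' P'' → Reach P P''

/-- `P` can perform the successful-termination label `√`. -/
def CanTick (P : Sys) : Prop := ∃ P', SStep P .tick P'

/-- Correct composition `P↓`: every reachable state can reach a state able to
perform `√`. -/
def Correct (P : Sys) : Prop :=
  ∀ P', Reach P P' → ∃ P'', Reach P' P'' ∧ CanTick P''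

/-- `WTrace P w` is the weak transition `P ⇒^{w√}`: `P` performs the sequence
`w` of completed interactions `a_{r→s}` (absorbing `τ` steps) and then `√`. -/
inductive WTrace : Sys → List (AName × Role × Role) → Prop
  | tick : CanTick P → WTrace P []
  | tau : SStep P .tau P' → WTrace P' w → WTrace P w
  | comm : SStep P (.comm a r s) P' → WTrace P' w → WTrace P ((a, r, s) :: w)

/-- `CTrace H w` is the transition sequence `H →^{w√}`. -/
inductive CTrace : Chor → List (AName × Role × Role) → Prop
  | tick : CStep H .tick H' → CTrace H []
  | comm : CStep H (.comm a r s) H' → CTrace H' w → CTrace H ((a, r, s) :: w)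

/-- `P` implements `H` (written `P ∝ H`): `P` is a correct composition and all
its conversations (followed by `√`) are admitted by `H`. -/
def Implements (P : Sys) (H : Chor) : Prop :=
  Correct P ∧ ∀ w, WTrace P w → CTrace H w

/-! ### Projection and well-formedness -/

/-- Projection of a choreography on a role (homomorphic over all operators). -/
def proj : Chor → Role → Orc
  | .comm a r s, t => if t = r then .out a s else if t = s then .inp a else .one
  | .choice H L, t => .choice (proj H t) (proj L t)
  | .seq H L, t => .seq (proj H t) (proj L t)
  | .par H L, t => .par (proj H t) (proj L t)
  | .star H, t => .star (proj H t)
  | .one, _ => .one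
  | .zero, _ => .zero

/-- Parallel composition of a list of located contracts
`[C_1]_{l_1} || … || [C_n]_{l_n}`. -/
def composeC : List (Orc × Role) → Sys
  | [] => .atom .one 0
  | [(C, l)] => .atom C l
  | (C, l) :: x :: xs => .par (.atom C l) (composeC (x :: xs))

/-- Well-formed choreography: the system obtained by projecting `H` on all its
roles implements `H` (for any enumeration of its roles). -/
def WellFormed (H : Chor) : Prop :=
  ∀ L : List Role, L.Nodup → L.toFinset = rolesC H →
    Implements (composeC (L.map fun r => (proj H r, r))) H

/-! ### Behavioural contracts: basic notions -/

/-- Roles targeted by output actions syntactically occurring in a contract. -/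
def oroles : Orc → Finset Role
  | .out _ l => {l}
  | .seq C D | .choice C D | .par C D => oroles C ∪ oroles D
  | .star C => oroles C
  | _ => ∅

/-- Input action names syntactically occurring in a contract: `I(C)`. -/
def inames : Orc → Finset AName
  | .inp a => {a}
  | .seq C D | .choice C D | .par C D => inames C ∪ inames D
  | .star C => inames C
  | _ => ∅

/-- `C \\ M`: replace every input on a name in `M` occurring in `C` by `0`. -/
def restrict (C : Orc) (M : Finset AName) : Orc :=
  match C with
  | .inp a => if a ∈ M then .zero else .inp a
  | .seq C D => .seq (restrict C M) (restrict D M)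
  | .choice C D => .choice (restrict C M) (restrict D M)
  | .par C D => .par (restrict C M) (restrict D M)
  | .star C => .star (restrict C M)
  | C => C

/-- Reachability in the contract LTS (through any labels). -/
inductive OReach : Orc → Orc → Prop
  | refl (C) : OReach C C
  | step : OStep C μ C' → OReach C' C'' → OReach C C''

/-- Output persistence: once a contract decides to execute an output, its
actual execution is mandatory to reach successful termination. -/
def OutputPersistent (C : Orc) : Prop :=
  ∀ C', OReach C C' → ∀ a l, (∃ D, OStep C' (.out a l) D) →
    (¬ ∃ D, OStep C' .tick D) ∧
    (∀ μ C'', OStep C' μ C'' → μ ≠ .out a l → ∃ D, OStep C'' (.out a l) D)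

/-- The list of roles of the located contracts occurring in a system. -/
def rolesList : Sys → List Role
  | .atom _ r => [r]
  | .par P Q => rolesList P ++ rolesList Q

/-- No contract sends outputs to its own role. -/
def NoSelfOut : Sys → Prop
  | .atom C r => r ∉ oroles C
  | .par P Q => NoSelfOut P ∧ NoSelfOut Q

/-- Well-formed system: pairwise distinct roles, no output to one's own role. -/
def WFSys (P : Sys) : Prop := (rolesList P).Nodup ∧ NoSelfOut P

/-- All contracts occurring in the system are output persistent. -/
def AllOP : Sys → Prop
  | .atom C _ => OutputPersistent C
  | .par P Q => AllOP P ∧ AllOP Q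

/-- The subcontract relation `C' ⪯ C` (compliance testing): for every fresh
role `l` and every test composition `P` of output persistent contracts not
using `l`, correctness of `[C]_l || P` implies correctness of `[C']_l || P`. -/
def Subcontract (C' C : Orc) : Prop :=
  ∀ l : Role, l ∉ oroles C ∪ oroles C' →
    ∀ P : Sys, AllOP P → WFSys P → l ∉ rolesList P →
      Correct (.par (.atom C l) P) → Correct (.par (.atom C' l) P)

/-- Independent subcontract pre-order over output persistent contracts:
a pre-order such that refining any number of contracts of a correct system
independently preserves correctness. -/
def IndepSubcontractPre (le : Orc → Orc → Prop) : Prop :=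
  (∀ C, OutputPersistent C → le C C) ∧
  (∀ C₁ C₂ C₃, OutputPersistent C₁ → OutputPersistent C₂ → OutputPersistent C₃ →
      le C₁ C₂ → le C₂ C₃ → le C₁ C₃) ∧
  (∀ L : List (Orc × Orc × Role), L ≠ [] →
    (∀ x ∈ L, OutputPersistent x.1 ∧ OutputPersistent x.2.1 ∧ le x.2.1 x.1) →
    (L.map fun x => x.2.2).Nodup →
    (∀ x ∈ L, x.2.2 ∉ oroles x.1 ∪ oroles x.2.1) →
    Correct (composeC (L.map fun x => (x.1, x.2.2))) →
    Correct (composeC (L.map fun x => (x.2.1, x.2.2))))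

/-- An uncontrollable contract: no test composition can lead it to success. -/
def Uncontrollable (C : Orc) : Prop :=
  ¬ ∃ (l : Role) (P : Sys), l ∉ oroles C ∧ AllOP P ∧ WFSys P ∧ l ∉ rolesList P ∧
      Correct (.par (.atom C l) P)

/-- Weak traces of a contract: sequences of visible labels, absorbing `τ`. -/
inductive WOTrace : Orc → List OLabel → Prop
  | nil (C) : WOTrace C []
  | tau : OStep C .tau C' → WOTrace C' w → WOTrace C w
  | vis : OStep C μ C' → μ ≠ .tau → WOTrace C' w → WOTrace C (μ :: w)

/-! ### Should-testing (fair testing) à la Rensink–Vogler -/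

/-- Labels of tests: internal moves, synchronization with a (visible) action of
the tested contract (`√` included as any other action), and test success `√'`. -/
inductive TLab : Type
  | tau : TLab
  | sync : OLabel → TLab
  | succ : TLab

/-- A test: a labelled transition system over `TLab`. -/
structure TestLTS where
  S : Type
  step : S → TLab → S → Prop
  init : S

/-- Steps of a contract/test configuration. -/
inductive TCStep (T : TestLTS) : (Orc × T.S) → (Orc × T.S) → Prop
  | ctau : OStep C .tau C' → TCStep T (C, t) (C', t)
  | ttau : T.step t .tau t' → TCStep T (C, t) (C, t')
  | sync : OStep C μ C' → μ ≠ OLabel.tau → T.step t (.sync μ) t' → TCStep T (C, t) (C', t')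

/-- Reachability of configurations. -/
inductive TCReach (T : TestLTS) : (Orc × T.S) → (Orc × T.S) → Prop
  | refl (c) : TCReach T c c
  | step : TCStep T c c' → TCReach T c' c'' → TCReach T c c''

/-- `C` should-passes `T`: from every reachable configuration a configuration
in which the test can perform the success action is reachable. -/
def Shd (C : Orc) (T : TestLTS) : Prop :=
  ∀ c, TCReach T (C, T.init) c → ∃ c', TCReach T c c' ∧ ∃ t', T.step c'.2 .succ t'

/-- The should-testing (fair testing) pre-order: `ShouldPre C' C` holds iff
every test that `C` should-passes is also should-passed by `C'`. -/
def ShouldPre (C' C : Orc) : Prop := ∀ T : TestLTS, Shd C T → Shd C' T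

/-- The normal form `NF(C)`: the recursive-equations presentation of the LTS of
`C`.  Since contracts are here represented directly by LTS-denoting terms and
the should-testing pre-order only depends on the underlying LTS, the normal
form is the term itself. -/
def NF (C : Orc) : Orc := C

/-- A conformance relation for a (well-formed) choreography `H`: a relation
between contracts and roles of `H` such that every role is inhabited and any
choice of related contracts, one per role of `H`, yields a system that
implements `H`. -/
def ConformanceRel (R : Orc → Role → Prop) (H : Chor) : Prop :=
  (∀ r ∈ rolesC H, ∃ C, R C r) ∧
  (∀ L : List (Orc × Role), L ≠ [] → (L.map Prod.snd).Nodup →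
    (L.map Prod.snd).toFinset = rolesC H →
    (∀ x ∈ L, R x.1 x.2) → Implements (composeC L) H)

/-- Testing consonance: `C ⊗^r_test H` iff
`NF(C \\ (I(C) − I(⟦H⟧_r))) ⪯_test NF(⟦H⟧_r)`. -/
def Consonant (C : Orc) (r : Role) (H : Chor) : Prop :=
  ShouldPre (NF (restrict C (inames C \ inames (proj H r)))) (NF (proj H r))

/-! ### Auxiliary lemmas: restriction -/

lemma restrict_fwd {M : Finset AName} {C C' : Orc} {μ : OLabel} (h : OStep C μ C')
    (hM : ∀ a, μ = .inp a → a ∉ M) : OStep (restrict C M) μ (restrict C' M) := by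
  induction h with
  | one => exact OStep.one
  | tau => exact OStep.tau
  | inp =>
    rename_i a
    have : a ∉ M := hM a rfl
    simp only [restrict, if_neg this]
    exact OStep.inp
  | out => exact OStep.out
  | choiceL _ ih => exact OStep.choiceL (ih hM)
  | choiceR _ ih => exact OStep.choiceR (ih hM)
  | seqL _ hne ih => exact OStep.seqL (ih hM) hne
  | seqTick _ _ ih1 ih2 =>
    exact OStep.seqTick (ih1 (by simp)) (ih2 hM)
  | parL _ hne ih => exact OStep.parL (ih hM) hne
  | parR _ hne ih => exact OStep.parR (ih hM) hne
  | parTick _ _ ih1 ih2 => exact OStep.parTick (ih1 (by simp)) (ih2 (by simp))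
  | starTick => exact OStep.starTick
  | starStep _ hne ih => exact OStep.starStep (ih hM) hne

lemma restrict_bwd {M : Finset AName} :
    ∀ {C : Orc} {μ : OLabel} {E : Orc}, OStep (restrict C M) μ E →
      ∃ C', OStep C μ C' ∧ E = restrict C' M := by
  intro C
  induction C with
  | zero => intro μ E h; simp only [restrict] at h; cases h
  | one => intro μ E h; simp only [restrict] at h; cases h; exact ⟨.zero, OStep.one, rfl⟩
  | tau => intro μ E h; simp only [restrict] at h; cases h; exact ⟨.one, OStep.tau, rfl⟩
  | inp a =>
    intro μ E h; simp only [restrict] at h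
    by_cases hm : a ∈ M
    · rw [if_pos hm] at h; cases h
    · rw [if_neg hm] at h; cases h; exact ⟨.one, OStep.inp, rfl⟩
  | out a l => intro μ E h; simp only [restrict] at h; cases h; exact ⟨.one, OStep.out, rfl⟩
  | seq A B ihA ihB =>
    intro μ E h; simp only [restrict] at h
    cases h with
    | seqL h1 hne =>
      obtain ⟨A', hA, rfl⟩ := ihA h1
      exact ⟨.seq A' B, OStep.seqL hA hne, rfl⟩
    | seqTick h1 h2 =>
      obtain ⟨A', hA, _⟩ := ihA h1
      obtain ⟨B', hB, rfl⟩ := ihB h2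
      exact ⟨B', OStep.seqTick hA hB, rfl⟩
  | choice A B ihA ihB =>
    intro μ E h; simp only [restrict] at h
    cases h with
    | choiceL h1 =>
      obtain ⟨A', hA, rfl⟩ := ihA h1
      exact ⟨A', OStep.choiceL hA, rfl⟩
    | choiceR h1 =>
      obtain ⟨B', hB, rfl⟩ := ihB h1
      exact ⟨B', OStep.choiceR hB, rfl⟩
  | par A B ihA ihB =>
    intro μ E h; simp only [restrict] at h
    cases h with
    | parL h1 hne =>
      obtain ⟨A', hA, rfl⟩ := ihA h1
      exact ⟨.par A' B, OStep.parL hA hne, rfl⟩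
    | parR h1 hne =>
      obtain ⟨B', hB, rfl⟩ := ihB h1
      exact ⟨.par A B', OStep.parR hB hne, rfl⟩
    | parTick h1 h2 =>
      obtain ⟨A', hA, rfl⟩ := ihA h1
      obtain ⟨B', hB, rfl⟩ := ihB h2
      exact ⟨.par A' B', OStep.parTick hA hB, rfl⟩
  | star A ihA =>
    intro μ E h; simp only [restrict] at h
    cases h with
    | starTick => exact ⟨.zero, OStep.starTick, rfl⟩
    | starStep h1 hne =>
      obtain ⟨A', hA, rfl⟩ := ihA h1
      exact ⟨.seq A' (.star A), OStep.starStep hA hne, rfl⟩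

lemma restrict_empty (C : Orc) : restrict C ∅ = C := by
  induction C <;> simp [restrict, *]

/-! ### Syntactic outputs and their behavioural soundness -/

/-- Output actions (name, target role) syntactically occurring in a contract. -/
def onames2 : Orc → Finset (AName × Role)
  | .out a l => {(a, l)}
  | .seq C D | .choice C D | .par C D => onames2 C ∪ onames2 D
  | .star C => onames2 C
  | _ => ∅

lemma ostep_onames_sub {C C' : Orc} {μ : OLabel} (h : OStep C μ C') :
    onames2 C' ⊆ onames2 C := by
  induction h with
  | one => simp [onames2]
  | tau => simp [onames2]
  | inp => simp [onames2]
  | out => simp [onames2]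
  | choiceL _ ih => exact ih.trans (by simp [onames2])
  | choiceR _ ih => exact ih.trans (by simp [onames2])
  | seqL _ _ ih => simp only [onames2]; exact Finset.union_subset_union ih (le_refl _)
  | seqTick _ _ _ ih2 => exact ih2.trans (by simp [onames2])
  | parL _ _ ih => simp only [onames2]; exact Finset.union_subset_union ih (le_refl _)
  | parR _ _ ih => simp only [onames2]; exact Finset.union_subset_union (le_refl _) ih
  | parTick _ _ ih1 ih2 => simp only [onames2]; exact Finset.union_subset_union ih1 ih2
  | starTick => simp [onames2]
  | starStep _ _ ih =>
    simp only [onames2]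
    exact Finset.union_subset ih (by simp [onames2])

lemma ostep_out_mem {C C' : Orc} {μ : OLabel} (h : OStep C μ C') :
    ∀ a l, μ = .out a l → (a, l) ∈ onames2 C := by
  induction h with
  | one => intro a l h; cases h
  | tau => intro a l h; cases h
  | inp => intro a l h; cases h
  | out => intro a l h; cases h; simp [onames2]
  | choiceL _ ih => intro a l h; subst h; simp only [onames2, Finset.mem_union]; exact Or.inl (ih a l rfl)
  | choiceR _ ih => intro a l h; subst h; simp only [onames2, Finset.mem_union]; exact Or.inr (ih a l rfl)
  | seqL _ _ ih => intro a l h; subst h; simp only [onames2, Finset.mem_union]; exact Or.inl (ih a l rfl)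
  | seqTick _ _ _ ih2 => intro a l h; subst h; simp only [onames2, Finset.mem_union]; exact Or.inr (ih2 a l rfl)
  | parL _ _ ih => intro a l h; subst h; simp only [onames2, Finset.mem_union]; exact Or.inl (ih a l rfl)
  | parR _ _ ih => intro a l h; subst h; simp only [onames2, Finset.mem_union]; exact Or.inr (ih a l rfl)
  | parTick => intro a l h; cases h
  | starTick => intro a l h; cases h
  | starStep _ _ ih => intro a l h; subst h; simp only [onames2]; exact ih a l rfl

lemma wotrace_out_mem {C : Orc} {w : List OLabel} (h : WOTrace C w) :
    ∀ a l, (OLabel.out a l) ∈ w → (a, l) ∈ onames2 C := by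
  induction h with
  | nil => intro a l h; simp at h
  | tau hst _ ih => intro a l h; exact ostep_onames_sub hst (ih a l h)
  | vis hst hne _ ih =>
    intro a l h
    rcases List.mem_cons.1 h with h | h
    · exact ostep_out_mem hst a l h.symm
    · exact ostep_onames_sub hst (ih a l h)

/-! ### Reachability and traces -/

lemma oreach_snoc {A B B' : Orc} {μ : OLabel} (h : OReach A B) (h2 : OStep B μ B') :
    OReach A B' := by
  induction h with
  | refl => exact OReach.step h2 (OReach.refl _)
  | step h1 _ ih => exact OReach.step h1 (ih h2)

lemma oreach_out_trace {C D D' : Orc} {a : AName} {l : Role}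
    (h : OReach C D) (h2 : OStep D (.out a l) D') :
    ∃ w, WOTrace C w ∧ (OLabel.out a l) ∈ w := by
  induction h with
  | refl => exact ⟨[.out a l], WOTrace.vis h2 (by simp) (WOTrace.nil _), by simp⟩
  | step h1 _ ih =>
    obtain ⟨w, hw, hm⟩ := ih h2
    rename_i μ _ _ _
    by_cases hμ : μ = .tau
    · subst hμ; exact ⟨w, WOTrace.tau h1 hw, hm⟩
    · exact ⟨μ :: w, WOTrace.vis h1 hμ hw, by simp [hm]⟩

/-! ### Should-testing implies trace inclusion -/

/-- A trace test: succeeds anywhere except after having synchronized on all of `w`. -/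
def traceTest (w : List OLabel) : TestLTS where
  S := List OLabel
  init := w
  step := fun s lab s' =>
    match s with
    | [] => False
    | μ :: v => (lab = .sync μ ∧ s' = v) ∨ (lab = .succ ∧ s' = μ :: v)

lemma traceTest_step_cases {w : List OLabel} {s s' : List OLabel} {lab : TLab}
    (h : (traceTest w).step s lab s') :
    ∃ μ v, s = μ :: v ∧ ((lab = .sync μ ∧ s' = v) ∨ (lab = .succ ∧ s' = μ :: v)) := by
  cases s with
  | nil => simp [traceTest] at h
  | cons μ v => exact ⟨μ, v, rfl, h⟩

lemma traceTest_reach_nil_aux {w : List OLabel} {c0 c1 : Orc × (traceTest w).S}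
    (h : TCReach (traceTest w) c0 c1) (hnil : c1.2 = []) : WOTrace c0.1 c0.2 := by
  induction h with
  | refl c =>
    obtain ⟨C, v⟩ := c
    simp only at hnil
    subst hnil
    exact WOTrace.nil _
  | step hst _ ih =>
    cases hst with
    | ctau h1 => exact WOTrace.tau h1 (ih hnil)
    | ttau h1 =>
      obtain ⟨μ, v, rfl, ⟨h2, _⟩ | ⟨h2, _⟩⟩ := traceTest_step_cases h1 <;> cases h2
    | sync h1 hne h2 =>
      obtain ⟨μ0, v, rfl, ⟨he, rfl⟩ | ⟨he, _⟩⟩ := traceTest_step_cases h2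
      · cases he
        exact WOTrace.vis h1 hne (ih hnil)
      · cases he

lemma traceTest_reach_nil {w : List OLabel} {C : Orc} {v : List OLabel} {D : Orc}
    (h : TCReach (traceTest w) (C, v) (D, [])) : WOTrace C v :=
  traceTest_reach_nil_aux h rfl

lemma traceTest_complete {w : List OLabel} :
    ∀ {C : Orc} {v : List OLabel}, WOTrace C v →
      ∃ D, TCReach (traceTest w) (C, v) (D, []) := by
  intro C v h
  induction h with
  | nil C => exact ⟨C, TCReach.refl _⟩
  | tau h1 _ ih =>
    obtain ⟨D, hD⟩ := ih
    exact ⟨D, TCReach.step (TCStep.ctau h1) hD⟩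
  | vis h1 hne _ ih =>
    obtain ⟨D, hD⟩ := ih
    exact ⟨D, TCReach.step (TCStep.sync h1 hne (Or.inl ⟨rfl, rfl⟩)) hD⟩

lemma traceTest_stuck {w : List OLabel} {c0 c : Orc × (traceTest w).S}
    (h : TCReach (traceTest w) c0 c) (h0 : c0.2 = []) : c.2 = [] := by
  induction h with
  | refl => exact h0
  | step hst _ ih =>
    cases hst with
    | ctau h1 => exact ih h0
    | ttau h1 =>
      obtain ⟨μ, v, heq, _⟩ := traceTest_step_cases h1
      rw [heq] at h0
      simp at h0
    | sync h1 hne h2 =>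
      obtain ⟨μ, v, heq, _⟩ := traceTest_step_cases h2
      rw [heq] at h0
      simp at h0

/-- Should-testing pre-order implies weak trace inclusion. -/
lemma shouldPre_trace {C' C : Orc} (h : ShouldPre C' C) {w : List OLabel}
    (hw : WOTrace C' w) : WOTrace C w := by
  by_contra hC
  have hshd : Shd C (traceTest w) := by
    intro c hc
    rcases c with ⟨D, v⟩
    cases v with
    | nil => exact absurd (traceTest_reach_nil hc) hC
    | cons μ v' =>
      exact ⟨(D, μ :: v'), TCReach.refl _, μ :: v', Or.inr ⟨rfl, rfl⟩⟩
  have hshd' := h _ hshd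
  obtain ⟨D, hD⟩ := traceTest_complete (w := w) hw
  obtain ⟨c', hc', t', ht'⟩ := hshd' _ hD
  have := traceTest_stuck hc' rfl
  rw [this] at ht'
  exact ht'
/-! ### Outputs of a projection target inputs of the corresponding projection -/

lemma proj_out_in {H : Chor} {r s : Role} {a : AName} (hrs : r ≠ s)
    (h : (a, s) ∈ onames2 (proj H r)) : a ∈ inames (proj H s) := by
  induction H with
  | comm b u v =>
    simp only [proj] at h
    by_cases hru : r = u
    · rw [if_pos hru] at h
      simp only [onames2, Finset.mem_singleton, Prod.mk.injEq] at h
      obtain ⟨rfl, rfl⟩ := h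
      subst hru
      simp [proj, inames, Ne.symm hrs]
    · rw [if_neg hru] at h
      split at h <;> simp [onames2] at h
  | choice A B ihA ihB =>
    simp only [proj, onames2, Finset.mem_union] at h
    simp only [proj, inames, Finset.mem_union]
    rcases h with h | h
    · exact Or.inl (ihA h)
    · exact Or.inr (ihB h)
  | seq A B ihA ihB =>
    simp only [proj, onames2, Finset.mem_union] at h
    simp only [proj, inames, Finset.mem_union]
    rcases h with h | h
    · exact Or.inl (ihA h)
    · exact Or.inr (ihB h)
  | par A B ihA ihB =>
    simp only [proj, onames2, Finset.mem_union] at h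
    simp only [proj, inames, Finset.mem_union]
    rcases h with h | h
    · exact Or.inl (ihA h)
    · exact Or.inr (ihB h)
  | star A ihA =>
    simp only [proj, onames2] at h
    simp only [proj, inames]
    exact ihA h
  | one => simp [proj, onames2] at h
  | zero => simp [proj, onames2] at h

/-! ### Roles of systems -/

lemma sstep_roles {P P' : Sys} {μ : SLabel} (h : SStep P μ P') :
    rolesList P' = rolesList P := by
  induction h <;> simp [rolesList, *]

lemma complete_roles {P P' : Sys} (h : CompleteStep P P') :
    rolesList P' = rolesList P := by
  rcases h with h | ⟨a, r, s, h⟩ <;> exact sstep_roles h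

lemma reach_roles {P P' : Sys} (h : Reach P P') : rolesList P' = rolesList P := by
  induction h with
  | refl => rfl
  | step h1 _ ih => rw [ih, complete_roles h1]

lemma sstep_out_role {P P' : Sys} {μ : SLabel} (h : SStep P μ P') :
    ∀ a r s, μ = .out a r s → r ∈ rolesList P := by
  induction h with
  | atomOut h1 => intro a r s he; cases he; simp [rolesList]
  | parL _ _ ih => intro a r s he; subst he; simp only [rolesList, List.mem_append]; exact Or.inl (ih a r s rfl)
  | parR _ _ ih => intro a r s he; subst he; simp only [rolesList, List.mem_append]; exact Or.inr (ih a r s rfl)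
  | atomTau _ => intro a r s he; cases he
  | atomInp _ => intro a r s he; cases he
  | atomTick _ => intro a r s he; cases he
  | commLR _ _ => intro a r s he; cases he
  | commRL _ _ => intro a r s he; cases he
  | parTick _ _ => intro a r s he; cases he

lemma sstep_inp_role {P P' : Sys} {μ : SLabel} (h : SStep P μ P') :
    ∀ a s, μ = .inp a s → s ∈ rolesList P := by
  induction h with
  | atomInp h1 => intro a s he; cases he; simp [rolesList]
  | parL _ _ ih => intro a s he; subst he; simp only [rolesList, List.mem_append]; exact Or.inl (ih a s rfl)
  | parR _ _ ih => intro a s he; subst he; simp only [rolesList, List.mem_append]; exact Or.inr (ih a s rfl)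
  | atomTau _ => intro a s he; cases he
  | atomOut _ => intro a s he; cases he
  | atomTick _ => intro a s he; cases he
  | commLR _ _ => intro a s he; cases he
  | commRL _ _ => intro a s he; cases he
  | parTick _ _ => intro a s he; cases he

/-! ### The restriction correspondence on systems -/

/-- Correspondence between a system and its componentwise restriction, with
each restricted component reachable from a fixed base contract for its role. -/
inductive CorrR (M : Role → Finset AName) (base : Role → Orc) : Sys → Sys → Prop
  | atom {C : Orc} {r : Role} (h : OReach (base r) (restrict C (M r))) :
      CorrR M base (.atom C r) (.atom (restrict C (M r)) r)
  | par {P Ps Q Qs : Sys} : CorrR M base P Ps → CorrR M base Q Qs →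
      CorrR M base (.par P Q) (.par Ps Qs)

/-- Legality of bases: no reachable state of a base sends a name restricted at
the target. -/
def Leg (M : Role → Finset AName) (base : Role → Orc) : Prop :=
  ∀ (r : Role) (D D' : Orc) (a : AName) (s : Role),
    OReach (base r) D → OStep D (.out a s) D' → r ≠ s → a ∉ M s

variable {M : Role → Finset AName} {base : Role → Orc}

lemma corr_out_leg (hleg : Leg M base) :
    ∀ {P μ P'}, SStep P μ P' → ∀ {Ps}, CorrR M base P Ps →
      ∀ a r s, μ = .out a r s → r ≠ s → a ∉ M s := by
  intro P μ P' h
  induction h with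
  | atomOut h1 =>
    intro Ps hcorr a r s he hrs
    cases he
    cases hcorr with
    | atom hre =>
      exact hleg _ _ _ _ _ hre (restrict_fwd h1 (by simp)) hrs
  | parL _ _ ih =>
    intro Ps hcorr a r s he hrs
    cases hcorr with
    | par hl hr => exact ih hl a r s he hrs
  | parR _ _ ih =>
    intro Ps hcorr a r s he hrs
    cases hcorr with
    | par hl hr => exact ih hr a r s he hrs
  | atomTau _ => intro _ _ a r s he; cases he
  | atomInp _ => intro _ _ a r s he; cases he
  | atomTick _ => intro _ _ a r s he; cases he
  | commLR _ _ => intro _ _ a r s he; cases he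
  | commRL _ _ => intro _ _ a r s he; cases he
  | parTick _ _ => intro _ _ a r s he; cases he

/-- Forward simulation: steps of the original system are matched by the
restricted system (inputs on restricted names being excluded). -/
lemma corr_sim (hleg : Leg M base) :
    ∀ {P μ P'}, SStep P μ P' → ∀ {Ps}, CorrR M base P Ps →
      (rolesList P).Nodup → (∀ a s, μ = .inp a s → a ∉ M s) →
      ∃ Ps', SStep Ps μ Ps' ∧ CorrR M base P' Ps' := by
  intro P μ P' h
  induction h with
  | atomTau h1 =>
    intro Ps hcorr _ _
    cases hcorr with
    | atom hre =>
      exact ⟨_, SStep.atomTau (restrict_fwd h1 (by simp)),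
        CorrR.atom (oreach_snoc hre (restrict_fwd h1 (by simp)))⟩
  | atomInp h1 =>
    intro Ps hcorr _ hM
    cases hcorr with
    | atom hre =>
      exact ⟨_, SStep.atomInp (restrict_fwd h1 (by rintro b hb; cases hb; exact hM _ _ rfl)),
        CorrR.atom (oreach_snoc hre (restrict_fwd h1 (by rintro b hb; cases hb; exact hM _ _ rfl)))⟩
  | atomOut h1 =>
    intro Ps hcorr _ _
    cases hcorr with
    | atom hre =>
      exact ⟨_, SStep.atomOut (restrict_fwd h1 (by simp)),
        CorrR.atom (oreach_snoc hre (restrict_fwd h1 (by simp)))⟩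
  | atomTick h1 =>
    intro Ps hcorr _ _
    cases hcorr with
    | atom hre =>
      exact ⟨_, SStep.atomTick (restrict_fwd h1 (by simp)),
        CorrR.atom (oreach_snoc hre (restrict_fwd h1 (by simp)))⟩
  | parL h1 hne ih =>
    intro Ps hcorr hnod hM
    cases hcorr with
    | par hl hr =>
      obtain ⟨Ps', hst, hc⟩ := ih hl (by
        simp only [rolesList, List.nodup_append] at hnod; exact hnod.1) hM
      exact ⟨_, SStep.parL hst hne, CorrR.par hc hr⟩
  | parR h1 hne ih =>
    intro Ps hcorr hnod hM
    cases hcorr with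
    | par hl hr =>
      obtain ⟨Qs', hst, hc⟩ := ih hr (by
        simp only [rolesList, List.nodup_append] at hnod; exact hnod.2.1) hM
      exact ⟨_, SStep.parR hst hne, CorrR.par hl hc⟩
  | commLR h1 h2 ih1 ih2 =>
    intro Ps hcorr hnod _
    cases hcorr with
    | par hl hr =>
      simp only [rolesList, List.nodup_append] at hnod
      obtain ⟨Ps', hst1, hc1⟩ := ih1 hl hnod.1 (by rintro b t hb; cases hb)
      obtain ⟨Qs', hst2, hc2⟩ := ih2 hr hnod.2.1 (by
        rintro b t hb
        cases hb
        refine corr_out_leg hleg h1 hl _ _ _ rfl ?_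
        intro he
        exact hnod.2.2 _ (sstep_out_role h1 _ _ _ rfl)
          _ (by rw [he]; exact sstep_inp_role h2 _ _ rfl) rfl)
      exact ⟨_, SStep.commLR hst1 hst2, CorrR.par hc1 hc2⟩
  | commRL h1 h2 ih1 ih2 =>
    intro Ps hcorr hnod _
    cases hcorr with
    | par hl hr =>
      simp only [rolesList, List.nodup_append] at hnod
      obtain ⟨Ps', hst1, hc1⟩ := ih1 hl hnod.1 (by
        rintro b t hb
        cases hb
        refine corr_out_leg hleg h2 hr _ _ _ rfl ?_
        intro he
        exact hnod.2.2 _ (sstep_inp_role h1 _ _ rfl)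
          _ (by rw [← he]; exact sstep_out_role h2 _ _ _ rfl) rfl)
      obtain ⟨Qs', hst2, hc2⟩ := ih2 hr hnod.2.1 (by rintro b t hb; cases hb)
      exact ⟨_, SStep.commRL hst1 hst2, CorrR.par hc1 hc2⟩
  | parTick h1 h2 ih1 ih2 =>
    intro Ps hcorr hnod _
    cases hcorr with
    | par hl hr =>
      simp only [rolesList, List.nodup_append] at hnod
      obtain ⟨Ps', hst1, hc1⟩ := ih1 hl hnod.1 (by rintro b t hb; cases hb)
      obtain ⟨Qs', hst2, hc2⟩ := ih2 hr hnod.2.1 (by rintro b t hb; cases hb)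
      exact ⟨_, SStep.parTick hst1 hst2, CorrR.par hc1 hc2⟩

/-- Backward simulation: every step of the restricted system is a step of the
original system. -/
lemma corr_simb :
    ∀ {Ps μ Qs}, SStep Ps μ Qs → ∀ {P}, CorrR M base P Ps →
      ∃ P', SStep P μ P' ∧ CorrR M base P' Qs := by
  intro Ps μ Qs h
  induction h with
  | atomTau h1 =>
    intro P hcorr
    cases hcorr with
    | atom hre =>
      obtain ⟨C', hC, rfl⟩ := restrict_bwd h1
      exact ⟨_, SStep.atomTau hC, CorrR.atom (oreach_snoc hre h1)⟩
  | atomInp h1 =>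
    intro P hcorr
    cases hcorr with
    | atom hre =>
      obtain ⟨C', hC, rfl⟩ := restrict_bwd h1
      exact ⟨_, SStep.atomInp hC, CorrR.atom (oreach_snoc hre h1)⟩
  | atomOut h1 =>
    intro P hcorr
    cases hcorr with
    | atom hre =>
      obtain ⟨C', hC, rfl⟩ := restrict_bwd h1
      exact ⟨_, SStep.atomOut hC, CorrR.atom (oreach_snoc hre h1)⟩
  | atomTick h1 =>
    intro P hcorr
    cases hcorr with
    | atom hre =>
      obtain ⟨C', hC, rfl⟩ := restrict_bwd h1
      exact ⟨_, SStep.atomTick hC, CorrR.atom (oreach_snoc hre h1)⟩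
  | parL h1 hne ih =>
    intro P hcorr
    cases hcorr with
    | par hl hr =>
      obtain ⟨P', hst, hc⟩ := ih hl
      exact ⟨_, SStep.parL hst hne, CorrR.par hc hr⟩
  | parR h1 hne ih =>
    intro P hcorr
    cases hcorr with
    | par hl hr =>
      obtain ⟨Q', hst, hc⟩ := ih hr
      exact ⟨_, SStep.parR hst hne, CorrR.par hl hc⟩
  | commLR h1 h2 ih1 ih2 =>
    intro P hcorr
    cases hcorr with
    | par hl hr =>
      obtain ⟨P', hst1, hc1⟩ := ih1 hl
      obtain ⟨Q', hst2, hc2⟩ := ih2 hr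
      exact ⟨_, SStep.commLR hst1 hst2, CorrR.par hc1 hc2⟩
  | commRL h1 h2 ih1 ih2 =>
    intro P hcorr
    cases hcorr with
    | par hl hr =>
      obtain ⟨P', hst1, hc1⟩ := ih1 hl
      obtain ⟨Q', hst2, hc2⟩ := ih2 hr
      exact ⟨_, SStep.commRL hst1 hst2, CorrR.par hc1 hc2⟩
  | parTick h1 h2 ih1 ih2 =>
    intro P hcorr
    cases hcorr with
    | par hl hr =>
      obtain ⟨P', hst1, hc1⟩ := ih1 hl
      obtain ⟨Q', hst2, hc2⟩ := ih2 hr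
      exact ⟨_, SStep.parTick hst1 hst2, CorrR.par hc1 hc2⟩

lemma corr_complete_fwd (hleg : Leg M base) {P P' Ps : Sys}
    (h : CompleteStep P P') (hc : CorrR M base P Ps) (hnod : (rolesList P).Nodup) :
    ∃ Ps', CompleteStep Ps Ps' ∧ CorrR M base P' Ps' := by
  rcases h with h | ⟨a, r, s, h⟩
  · obtain ⟨Ps', hst, hcc⟩ := corr_sim hleg h hc hnod (by rintro a s he; cases he)
    exact ⟨Ps', Or.inl hst, hcc⟩
  · obtain ⟨Ps', hst, hcc⟩ := corr_sim hleg h hc hnod (by rintro a s he; cases he)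
    exact ⟨Ps', Or.inr ⟨a, r, s, hst⟩, hcc⟩

lemma corr_reach_fwd (hleg : Leg M base) {P P' Ps : Sys}
    (h : Reach P P') (hc : CorrR M base P Ps) (hnod : (rolesList P).Nodup) :
    ∃ Ps', Reach Ps Ps' ∧ CorrR M base P' Ps' := by
  induction h generalizing Ps with
  | refl => exact ⟨Ps, Reach.refl _, hc⟩
  | step h1 h2 ih =>
    obtain ⟨Ps1, hst, hc1⟩ := corr_complete_fwd hleg h1 hc hnod
    obtain ⟨Ps', hre, hc'⟩ := ih hc1 (by rw [complete_roles h1]; exact hnod)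
    exact ⟨Ps', Reach.step hst hre, hc'⟩

lemma corr_reach_bwd {P Ps Qs : Sys}
    (h : Reach Ps Qs) (hc : CorrR M base P Ps) :
    ∃ P', Reach P P' ∧ CorrR M base P' Qs := by
  induction h generalizing P with
  | refl => exact ⟨P, Reach.refl _, hc⟩
  | step h1 h2 ih =>
    rcases h1 with h1 | ⟨a, r, s, h1⟩
    · obtain ⟨P1, hst, hc1⟩ := corr_simb h1 hc
      obtain ⟨P', hre, hc'⟩ := ih hc1
      exact ⟨P', Reach.step (Or.inl hst) hre, hc'⟩
    · obtain ⟨P1, hst, hc1⟩ := corr_simb h1 hc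
      obtain ⟨P', hre, hc'⟩ := ih hc1
      exact ⟨P', Reach.step (Or.inr ⟨a, r, s, hst⟩) hre, hc'⟩

lemma corr_cantick_fwd (hleg : Leg M base) {P Ps : Sys}
    (hc : CorrR M base P Ps) (hnod : (rolesList P).Nodup) (h : CanTick P) :
    CanTick Ps := by
  obtain ⟨P', h⟩ := h
  obtain ⟨Ps', hst, _⟩ := corr_sim hleg h hc hnod (by rintro a s he; cases he)
  exact ⟨Ps', hst⟩

lemma corr_cantick_bwd {P Ps : Sys}
    (hc : CorrR M base P Ps) (h : CanTick Ps) : CanTick P := by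
  obtain ⟨Ps', h⟩ := h
  obtain ⟨P', hst, _⟩ := corr_simb h hc
  exact ⟨P', hst⟩

/-- Transfer of correctness from the restricted to the original system. -/
lemma corr_correct (hleg : Leg M base) {P Ps : Sys}
    (hc : CorrR M base P Ps) (hnod : (rolesList P).Nodup)
    (h : Correct Ps) : Correct P := by
  intro P' hre
  obtain ⟨Ps', hres, hc'⟩ := corr_reach_fwd hleg hre hc hnod
  obtain ⟨Ps'', hres', htick⟩ := h Ps' hres
  obtain ⟨P'', hre'', hc''⟩ := corr_reach_bwd hres' hc'
  exact ⟨P'', hre'', corr_cantick_bwd hc'' htick⟩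

/-- Transfer of weak traces from the original to the restricted system. -/
lemma corr_wtrace (hleg : Leg M base) {P Ps : Sys} {w : List (AName × Role × Role)}
    (h : WTrace P w) (hc : CorrR M base P Ps) (hnod : (rolesList P).Nodup) :
    WTrace Ps w := by
  induction h generalizing Ps with
  | tick h1 => exact WTrace.tick (corr_cantick_fwd hleg hc hnod h1)
  | tau h1 _ ih =>
    obtain ⟨Ps1, hst, hc1⟩ := corr_sim hleg h1 hc hnod (by rintro a s he; cases he)
    exact WTrace.tau hst (ih hc1 (by rwa [sstep_roles h1]))
  | comm h1 _ ih =>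
    obtain ⟨Ps1, hst, hc1⟩ := corr_sim hleg h1 hc hnod (by rintro a s he; cases he)
    exact WTrace.comm hst (ih hc1 (by rwa [sstep_roles h1]))
/-! ### The environment test: correctness as a should-testing property -/

lemma complete_parR {Q Q' X : Sys} (h : CompleteStep Q Q') :
    CompleteStep (.par X Q) (.par X Q') := by
  rcases h with h | ⟨a, r, s, h⟩
  · exact Or.inl (SStep.parR h (by simp))
  · exact Or.inr ⟨a, r, s, SStep.parR h (by simp)⟩

lemma tcreach_trans {T : TestLTS} {a b c : Orc × T.S}
    (h1 : TCReach T a b) (h2 : TCReach T b c) : TCReach T a c := by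
  induction h1 with
  | refl => exact h2
  | step hst _ ih => exact TCReach.step hst (ih h2)

/-- Test states: environment system states, plus a success state `none`
reached by synchronizing on `√`. -/
inductive EnvStep (l : Role) : Option Sys → TLab → Option Sys → Prop
  | tau {Q Q' : Sys} : CompleteStep Q Q' → EnvStep l (some Q) .tau (some Q')
  | out {Q Q' : Sys} {a : AName} {s : Role} :
      SStep Q (.inp a s) Q' → EnvStep l (some Q) (.sync (.out a s)) (some Q')
  | inp {Q Q' : Sys} {a : AName} {r : Role} :
      SStep Q (.out a r l) Q' → EnvStep l (some Q) (.sync (.inp a)) (some Q')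
  | tick {Q : Sys} : CanTick Q → EnvStep l (some Q) (.sync .tick) none
  | succ : EnvStep l none .succ none

/-- The test associated with an environment `P` of a contract located at `l`. -/
def envTest (l : Role) (P : Sys) : TestLTS := ⟨Option Sys, EnvStep l, some P⟩

lemma envTest_none {l : Role} {P : Sys} :
    ∀ {c c' : Orc × Option Sys}, TCReach (envTest l P) c c' → c.2 = none → c'.2 = none := by
  intro (c : Orc × (envTest l P).S) (c' : Orc × (envTest l P).S) h
  induction h with
  | refl => exact id
  | step hst _ ih =>
    intro hnone
    cases hst with
    | ctau h1 => exact ih hnone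
    | ttau h1 =>
      simp only at hnone; subst hnone; cases h1
    | sync h1 hne h2 =>
      simp only at hnone; subst hnone; cases h2

lemma envTest_reach {l : Role} {P : Sys} :
    ∀ {c c' : Orc × Option Sys}, TCReach (envTest l P) c c' →
      ∀ {D : Orc} {Q : Sys}, c = (D, some Q) →
      (∃ D' Q', c' = (D', some Q') ∧
        Reach (.par (.atom D l) Q) (.par (.atom D' l) Q')) ∨
      (∃ R, Reach (.par (.atom D l) Q) R ∧ CanTick R ∧ c'.2 = none) := by
  intro (c : Orc × (envTest l P).S) (c' : Orc × (envTest l P).S) h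
  induction h with
  | refl c0 => intro D Q hc; subst hc; exact Or.inl ⟨D, Q, rfl, Reach.refl _⟩
  | step hst hrest ih =>
    intro D Q hc
    subst hc
    change TCStep (envTest l P) ((D, some Q) : Orc × (envTest l P).S) _ at hst
    cases hst with
    | ctau h1 =>
      have hcs : CompleteStep (.par (.atom D l) Q) (.par (.atom _ l) Q) :=
        Or.inl (SStep.parL (SStep.atomTau h1) (by simp))
      rcases ih rfl with ⟨D', Q', rfl, hre⟩ | ⟨R, hre, ht, hn⟩
      · exact Or.inl ⟨D', Q', rfl, Reach.step hcs hre⟩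
      · exact Or.inr ⟨R, Reach.step hcs hre, ht, hn⟩
    | ttau h1 =>
      cases h1 with
      | tau h2 =>
        have hcs := complete_parR (X := .atom D l) h2
        rcases ih rfl with ⟨D', Q', rfl, hre⟩ | ⟨R, hre, ht, hn⟩
        · exact Or.inl ⟨D', Q', rfl, Reach.step hcs hre⟩
        · exact Or.inr ⟨R, Reach.step hcs hre, ht, hn⟩
    | sync h1 hne h2 =>
      cases h2 with
      | out h3 =>
        have hcs : CompleteStep (.par (.atom D l) Q) _ :=
          Or.inr ⟨_, _, _, SStep.commLR (SStep.atomOut h1) h3⟩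
        rcases ih rfl with ⟨D', Q', rfl, hre⟩ | ⟨R, hre, ht, hn⟩
        · exact Or.inl ⟨D', Q', rfl, Reach.step hcs hre⟩
        · exact Or.inr ⟨R, Reach.step hcs hre, ht, hn⟩
      | inp h3 =>
        have hcs : CompleteStep (.par (.atom D l) Q) _ :=
          Or.inr ⟨_, _, _, SStep.commRL (SStep.atomInp h1) h3⟩
        rcases ih rfl with ⟨D', Q', rfl, hre⟩ | ⟨R, hre, ht, hn⟩
        · exact Or.inl ⟨D', Q', rfl, Reach.step hcs hre⟩
        · exact Or.inr ⟨R, Reach.step hcs hre, ht, hn⟩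
      | tick h3 =>
        obtain ⟨Q0, hQ0⟩ := h3
        exact Or.inr ⟨_, Reach.refl _,
          ⟨_, SStep.parTick (SStep.atomTick h1) hQ0⟩, envTest_none hrest rfl⟩

lemma envTest_sys {l : Role} {P : Sys} :
    ∀ {X R : Sys}, Reach X R → ∀ {D : Orc} {Q : Sys}, X = .par (.atom D l) Q →
      ∃ D' Q', R = .par (.atom D' l) Q' ∧
        TCReach (envTest l P) (D, some Q) (D', some Q') := by
  intro X R h
  induction h with
  | refl => intro D Q hc; subst hc; exact ⟨D, Q, rfl, TCReach.refl _⟩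
  | step h1 h2 ih =>
    intro D Q hc
    subst hc
    rcases h1 with h1 | ⟨a, r, s, h1⟩
    · cases h1 with
      | parL h3 hne =>
        cases h3 with
        | atomTau h4 =>
          obtain ⟨D', Q', rfl, hre⟩ := ih rfl
          exact ⟨D', Q', rfl, TCReach.step (TCStep.ctau h4) hre⟩
      | parR h3 hne =>
        obtain ⟨D', Q', rfl, hre⟩ := ih rfl
        exact ⟨D', Q', rfl, TCReach.step (TCStep.ttau (EnvStep.tau (Or.inl h3))) hre⟩
    · cases h1 with
      | parL h3 hne => cases h3
      | parR h3 hne =>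
        obtain ⟨D', Q', rfl, hre⟩ := ih rfl
        exact ⟨D', Q', rfl,
          TCReach.step (TCStep.ttau (EnvStep.tau (Or.inr ⟨a, r, s, h3⟩))) hre⟩
      | commLR h3 h4 =>
        cases h3 with
        | atomOut h5 =>
          obtain ⟨D', Q', rfl, hre⟩ := ih rfl
          exact ⟨D', Q', rfl,
            TCReach.step (TCStep.sync h5 (by simp) (EnvStep.out h4)) hre⟩
      | commRL h3 h4 =>
        cases h3 with
        | atomInp h5 =>
          obtain ⟨D', Q', rfl, hre⟩ := ih rfl
          exact ⟨D', Q', rfl,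
            TCReach.step (TCStep.sync h5 (by simp) (EnvStep.inp h4)) hre⟩

lemma cantick_par {A B : Sys} (h : CanTick (.par A B)) :
    CanTick A ∧ CanTick B := by
  obtain ⟨R, hR⟩ := h
  cases hR with
  | parL h1 hne => exact absurd rfl hne
  | parR h1 hne => exact absurd rfl hne
  | parTick h1 h2 => exact ⟨⟨_, h1⟩, ⟨_, h2⟩⟩

lemma envTest_shd {l : Role} {P : Sys} {D : Orc} :
    Shd D (envTest l P) ↔ Correct (.par (.atom D l) P) := by
  constructor
  · intro h R hre
    obtain ⟨D', Q', rfl, hcr⟩ := envTest_sys (P := P) hre rfl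
    obtain ⟨c', hc', t', ht'⟩ := h _ hcr
    obtain ⟨D2, t2⟩ := c'
    cases ht' with
    | succ =>
      rcases envTest_reach hc' rfl with ⟨D3, Q3, heq, _⟩ | ⟨R', hre', htick, _⟩
      · cases heq
      · exact ⟨R', hre', htick⟩
  · intro hcorrect c hc
    obtain ⟨Dc, tc⟩ := c
    cases tc with
    | none => exact ⟨(Dc, none), TCReach.refl _, none, EnvStep.succ⟩
    | some Qc =>
      rcases envTest_reach hc rfl with ⟨D', Q', heq, hre⟩ | ⟨R, hre, htick, hnone⟩
      · cases heq
        obtain ⟨R'', hre'', htick⟩ := hcorrect _ hre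
        obtain ⟨D2, Q2, rfl, hcr2⟩ := envTest_sys (P := P) hre'' rfl
        obtain ⟨ht1, ht2⟩ := cantick_par htick
        obtain ⟨A1, hA1⟩ := ht1
        cases hA1 with
        | atomTick h5 =>
          exact ⟨(_, none),
            tcreach_trans hcr2
              (TCReach.step (TCStep.sync h5 (by simp) (EnvStep.tick ht2)) (TCReach.refl _)),
            none, EnvStep.succ⟩
      · simp at hnone

/-- Should-testing refinement preserves correctness in any system context. -/
lemma shouldPre_correct {C' C : Orc} (h : ShouldPre C' C) (l : Role) (P : Sys)
    (hcor : Correct (.par (.atom C l) P)) : Correct (.par (.atom C' l) P) :=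
  envTest_shd.mp (h _ (envTest_shd.mpr hcor))

/-! ### The system trace test -/

inductive WtStep (l : Role) :
    Option (Sys × List (AName × Role × Role)) → TLab →
    Option (Sys × List (AName × Role × Role)) → Prop
  | tau {Q Q' v} : SStep Q .tau Q' → WtStep l (some (Q, v)) .tau (some (Q', v))
  | taucomm {Q Q' a r s v} : SStep Q (.comm a r s) Q' →
      WtStep l (some (Q, (a, r, s) :: v)) .tau (some (Q', v))
  | out {Q Q' a s v} : SStep Q (.inp a s) Q' →
      WtStep l (some (Q, (a, l, s) :: v)) (.sync (.out a s)) (some (Q', v))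
  | inp {Q Q' a r v} : SStep Q (.out a r l) Q' →
      WtStep l (some (Q, (a, r, l) :: v)) (.sync (.inp a)) (some (Q', v))
  | tick {Q} : CanTick Q → WtStep l (some (Q, [])) (.sync .tick) none
  | succ {x} : WtStep l (some x) .succ (some x)

def wtTest (l : Role) (P : Sys) (w : List (AName × Role × Role)) : TestLTS :=
  ⟨Option (Sys × List (AName × Role × Role)), WtStep l, some (P, w)⟩

lemma wtTest_none {l : Role} {P : Sys} {w : List (AName × Role × Role)} :
    ∀ {c c' : Orc × Option (Sys × List (AName × Role × Role))},
      TCReach (wtTest l P w) c c' → c.2 = none → c'.2 = none := by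
  intro (c : Orc × (wtTest l P w).S) (c' : Orc × (wtTest l P w).S) h
  induction h with
  | refl => exact id
  | step hst _ ih =>
    intro hnone
    cases hst with
    | ctau h1 => exact ih hnone
    | ttau h1 => simp only at hnone; subst hnone; cases h1
    | sync h1 hne h2 => simp only at hnone; subst hnone; cases h2

lemma wtTest_reach {l : Role} {P : Sys} {w : List (AName × Role × Role)} :
    ∀ {c c' : Orc × Option (Sys × List (AName × Role × Role))},
      TCReach (wtTest l P w) c c' →
      ∀ {D : Orc} {Q : Sys} {v}, c = (D, some (Q, v)) → c'.2 = none →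
        WTrace (.par (.atom D l) Q) v := by
  intro (c : Orc × (wtTest l P w).S) (c' : Orc × (wtTest l P w).S) h
  induction h with
  | refl => intro D Q v hc hn; subst hc; simp at hn
  | step hst hrest ih =>
    intro D Q v hc hn
    subst hc
    change TCStep (wtTest l P w) ((D, some (Q, v)) : Orc × (wtTest l P w).S) _ at hst
    cases hst with
    | ctau h1 =>
      exact WTrace.tau (SStep.parL (SStep.atomTau h1) (by simp)) (ih rfl hn)
    | ttau h1 =>
      cases h1 with
      | tau h2 => exact WTrace.tau (SStep.parR h2 (by simp)) (ih rfl hn)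
      | taucomm h2 => exact WTrace.comm (SStep.parR h2 (by simp)) (ih rfl hn)
    | sync h1 hne h2 =>
      cases h2 with
      | out h3 => exact WTrace.comm (SStep.commLR (SStep.atomOut h1) h3) (ih rfl hn)
      | inp h3 => exact WTrace.comm (SStep.commRL (SStep.atomInp h1) h3) (ih rfl hn)
      | tick h3 =>
        obtain ⟨Q0, hQ0⟩ := h3
        exact WTrace.tick ⟨_, SStep.parTick (SStep.atomTick h1) hQ0⟩

lemma wtTest_complete {l : Role} {P : Sys} {w : List (AName × Role × Role)} :
    ∀ {X : Sys} {v}, WTrace X v → ∀ {D : Orc} {Q : Sys}, X = .par (.atom D l) Q →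
      ∃ c, TCReach (wtTest l P w) (D, some (Q, v)) c ∧ c.2 = none := by
  intro X v h
  induction h with
  | tick h1 =>
    intro D Q hc
    subst hc
    obtain ⟨ht1, ht2⟩ := cantick_par h1
    obtain ⟨A1, hA1⟩ := ht1
    cases hA1 with
    | atomTick h5 =>
      exact ⟨(_, none),
        TCReach.step (TCStep.sync h5 (by simp) (WtStep.tick ht2)) (TCReach.refl _), rfl⟩
  | tau h1 _ ih =>
    intro D Q hc
    subst hc
    cases h1 with
    | parL h3 hne =>
      cases h3 with
      | atomTau h4 =>
        obtain ⟨c, hc, hn⟩ := ih rfl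
        exact ⟨c, TCReach.step (TCStep.ctau h4) hc, hn⟩
    | parR h3 hne =>
      obtain ⟨c, hc, hn⟩ := ih rfl
      exact ⟨c, TCReach.step (TCStep.ttau (WtStep.tau h3)) hc, hn⟩
  | comm h1 _ ih =>
    intro D Q hc
    subst hc
    cases h1 with
    | parL h3 hne => cases h3
    | parR h3 hne =>
      obtain ⟨c, hc, hn⟩ := ih rfl
      exact ⟨c, TCReach.step (TCStep.ttau (WtStep.taucomm h3)) hc, hn⟩
    | commLR h3 h4 =>
      cases h3 with
      | atomOut h5 =>
        obtain ⟨c, hc, hn⟩ := ih rfl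
        exact ⟨c, TCReach.step (TCStep.sync h5 (by simp) (WtStep.out h4)) hc, hn⟩
    | commRL h3 h4 =>
      cases h3 with
      | atomInp h5 =>
        obtain ⟨c, hc, hn⟩ := ih rfl
        exact ⟨c, TCReach.step (TCStep.sync h5 (by simp) (WtStep.inp h4)) hc, hn⟩

lemma wtTest_shd {l : Role} {P : Sys} {D : Orc} {w : List (AName × Role × Role)} :
    Shd D (wtTest l P w) ↔ ¬ WTrace (.par (.atom D l) P) w := by
  constructor
  · intro h hw
    obtain ⟨c, hc, hn⟩ := wtTest_complete (w := w) hw rfl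
    obtain ⟨c', hc', t', ht'⟩ := h _ hc
    have hn' := wtTest_none hc' hn
    obtain ⟨D2, t2⟩ := c'
    simp only at hn'
    subst hn'
    cases ht'
  · intro hnw c hc
    obtain ⟨Dc, tc⟩ := c
    cases tc with
    | none => exact absurd (wtTest_reach hc rfl rfl) hnw
    | some x => exact ⟨(Dc, some x), TCReach.refl _, some x, WtStep.succ⟩

/-- Should-testing refinement reflects weak traces in any system context. -/
lemma shouldPre_wtrace {C' C : Orc} (h : ShouldPre C' C) (l : Role) (P : Sys)
    {w : List (AName × Role × Role)} (hw : WTrace (.par (.atom C' l) P) w) :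
    WTrace (.par (.atom C l) P) w := by
  by_contra hnw
  exact wtTest_shd.mp (h _ (wtTest_shd.mpr hnw)) hw
/-! ### Bisimulation up to `√` for systems -/

structure SBisim (R : Sys → Sys → Prop) : Prop where
  fwd : ∀ {P Q : Sys} {μ : SLabel} {P'}, R P Q → μ ≠ .tick → SStep P μ P' →
    ∃ Q', SStep Q μ Q' ∧ R P' Q'
  bwd : ∀ {P Q : Sys} {μ : SLabel} {Q'}, R P Q → μ ≠ .tick → SStep Q μ Q' →
    ∃ P', SStep P μ P' ∧ R P' Q'
  tick_fwd : ∀ {P Q : Sys}, R P Q → CanTick P → CanTick Q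
  tick_bwd : ∀ {P Q : Sys}, R P Q → CanTick Q → CanTick P

def SEquiv (P Q : Sys) : Prop := ∃ R, SBisim R ∧ R P Q

lemma sequiv_refl (P : Sys) : SEquiv P P :=
  ⟨Eq, ⟨fun h _ hs => ⟨_, h ▸ hs, rfl⟩, fun h _ hs => ⟨_, h ▸ hs, rfl⟩,
    fun h ht => h ▸ ht, fun h ht => h ▸ ht⟩, rfl⟩

lemma sequiv_symm {P Q : Sys} (h : SEquiv P Q) : SEquiv Q P := by
  obtain ⟨R, hb, hR⟩ := h
  exact ⟨fun a b => R b a,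
    ⟨fun h hμ hs => hb.bwd h hμ hs, fun h hμ hs => hb.fwd h hμ hs,
     fun h ht => hb.tick_bwd h ht, fun h ht => hb.tick_fwd h ht⟩, hR⟩

lemma sequiv_trans {P Q R : Sys} (h1 : SEquiv P Q) (h2 : SEquiv Q R) : SEquiv P R := by
  obtain ⟨R1, hb1, hR1⟩ := h1
  obtain ⟨R2, hb2, hR2⟩ := h2
  refine ⟨fun a c => ∃ b, R1 a b ∧ R2 b c, ⟨?_, ?_, ?_, ?_⟩, Q, hR1, hR2⟩
  · rintro P Q μ P' ⟨b, h1, h2⟩ hμ hs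
    obtain ⟨b', hs1, hR1'⟩ := hb1.fwd h1 hμ hs
    obtain ⟨c', hs2, hR2'⟩ := hb2.fwd h2 hμ hs1
    exact ⟨c', hs2, b', hR1', hR2'⟩
  · rintro P Q μ Q' ⟨b, h1, h2⟩ hμ hs
    obtain ⟨b', hs2, hR2'⟩ := hb2.bwd h2 hμ hs
    obtain ⟨a', hs1, hR1'⟩ := hb1.bwd h1 hμ hs2
    exact ⟨a', hs1, b', hR1', hR2'⟩
  · rintro P Q ⟨b, h1, h2⟩ ht
    exact hb2.tick_fwd h2 (hb1.tick_fwd h1 ht)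
  · rintro P Q ⟨b, h1, h2⟩ ht
    exact hb1.tick_bwd h1 (hb2.tick_bwd h2 ht)

/-- Left congruence of `SEquiv` w.r.t. parallel composition. -/
lemma sequiv_parCongL {A B : Sys} (h : SEquiv A B) (C : Sys) :
    SEquiv (.par A C) (.par B C) := by
  obtain ⟨R, hb, hR⟩ := h
  refine ⟨fun X Y => ∃ A' B' C', X = .par A' C' ∧ Y = .par B' C' ∧ R A' B',
    ⟨?_, ?_, ?_, ?_⟩, A, B, C, rfl, rfl, hR⟩
  · rintro X Y μ X' ⟨A', B', C', rfl, rfl, hR'⟩ hμ hs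
    cases hs with
    | parL h1 hne =>
      obtain ⟨B2, hB, hR2⟩ := hb.fwd hR' hne h1
      exact ⟨_, SStep.parL hB hne, _, _, _, rfl, rfl, hR2⟩
    | parR h1 hne =>
      exact ⟨_, SStep.parR h1 hne, _, _, _, rfl, rfl, hR'⟩
    | commLR h1 h2 =>
      obtain ⟨B2, hB, hR2⟩ := hb.fwd hR' (by simp) h1
      exact ⟨_, SStep.commLR hB h2, _, _, _, rfl, rfl, hR2⟩
    | commRL h1 h2 =>
      obtain ⟨B2, hB, hR2⟩ := hb.fwd hR' (by simp) h1
      exact ⟨_, SStep.commRL hB h2, _, _, _, rfl, rfl, hR2⟩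
    | parTick h1 h2 => exact absurd rfl hμ
  · rintro X Y μ Y' ⟨A', B', C', rfl, rfl, hR'⟩ hμ hs
    cases hs with
    | parL h1 hne =>
      obtain ⟨A2, hA, hR2⟩ := hb.bwd hR' hne h1
      exact ⟨_, SStep.parL hA hne, _, _, _, rfl, rfl, hR2⟩
    | parR h1 hne =>
      exact ⟨_, SStep.parR h1 hne, _, _, _, rfl, rfl, hR'⟩
    | commLR h1 h2 =>
      obtain ⟨A2, hA, hR2⟩ := hb.bwd hR' (by simp) h1
      exact ⟨_, SStep.commLR hA h2, _, _, _, rfl, rfl, hR2⟩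
    | commRL h1 h2 =>
      obtain ⟨A2, hA, hR2⟩ := hb.bwd hR' (by simp) h1
      exact ⟨_, SStep.commRL hA h2, _, _, _, rfl, rfl, hR2⟩
    | parTick h1 h2 => exact absurd rfl hμ
  · rintro X Y ⟨A', B', C', rfl, rfl, hR'⟩ ht
    obtain ⟨h1, h2⟩ := cantick_par ht
    obtain ⟨B2, hB⟩ := hb.tick_fwd hR' h1
    obtain ⟨C2, hC⟩ := h2
    exact ⟨_, SStep.parTick hB hC⟩
  · rintro X Y ⟨A', B', C', rfl, rfl, hR'⟩ ht
    obtain ⟨h1, h2⟩ := cantick_par ht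
    obtain ⟨A2, hA⟩ := hb.tick_bwd hR' h1
    obtain ⟨C2, hC⟩ := h2
    exact ⟨_, SStep.parTick hA hC⟩

lemma sequiv_comm (A B : Sys) : SEquiv (.par A B) (.par B A) := by
  refine ⟨fun X Y => ∃ A' B', X = .par A' B' ∧ Y = .par B' A',
    ⟨?_, ?_, ?_, ?_⟩, A, B, rfl, rfl⟩
  · rintro X Y μ X' ⟨A', B', rfl, rfl⟩ hμ hs
    cases hs with
    | parL h1 hne => exact ⟨_, SStep.parR h1 hne, _, _, rfl, rfl⟩
    | parR h1 hne => exact ⟨_, SStep.parL h1 hne, _, _, rfl, rfl⟩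
    | commLR h1 h2 => exact ⟨_, SStep.commRL h2 h1, _, _, rfl, rfl⟩
    | commRL h1 h2 => exact ⟨_, SStep.commLR h2 h1, _, _, rfl, rfl⟩
    | parTick h1 h2 => exact absurd rfl hμ
  · rintro X Y μ Y' ⟨A', B', rfl, rfl⟩ hμ hs
    cases hs with
    | parL h1 hne => exact ⟨_, SStep.parR h1 hne, _, _, rfl, rfl⟩
    | parR h1 hne => exact ⟨_, SStep.parL h1 hne, _, _, rfl, rfl⟩
    | commLR h1 h2 => exact ⟨_, SStep.commRL h2 h1, _, _, rfl, rfl⟩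
    | commRL h1 h2 => exact ⟨_, SStep.commLR h2 h1, _, _, rfl, rfl⟩
    | parTick h1 h2 => exact absurd rfl hμ
  · rintro X Y ⟨A', B', rfl, rfl⟩ ht
    obtain ⟨⟨A2, hA⟩, ⟨B2, hB⟩⟩ := cantick_par ht
    exact ⟨_, SStep.parTick hB hA⟩
  · rintro X Y ⟨A', B', rfl, rfl⟩ ht
    obtain ⟨⟨B2, hB⟩, ⟨A2, hA⟩⟩ := cantick_par ht
    exact ⟨_, SStep.parTick hA hB⟩

lemma sequiv_assoc (A B C : Sys) :
    SEquiv (.par (.par A B) C) (.par A (.par B C)) := by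
  refine ⟨fun X Y => ∃ A' B' C', X = .par (.par A' B') C' ∧ Y = .par A' (.par B' C'),
    ⟨?_, ?_, ?_, ?_⟩, A, B, C, rfl, rfl⟩
  · rintro X Y μ X' ⟨A', B', C', rfl, rfl⟩ hμ hs
    cases hs with
    | parL h1 hne =>
      cases h1 with
      | parL h2 hne2 => exact ⟨_, SStep.parL h2 hne, _, _, _, rfl, rfl⟩
      | parR h2 hne2 => exact ⟨_, SStep.parR (SStep.parL h2 hne) hne, _, _, _, rfl, rfl⟩
      | commLR h2 h3 =>
        exact ⟨_, SStep.commLR h2 (SStep.parL h3 (by simp)), _, _, _, rfl, rfl⟩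
      | commRL h2 h3 =>
        exact ⟨_, SStep.commRL h2 (SStep.parL h3 (by simp)), _, _, _, rfl, rfl⟩
      | parTick h2 h3 => exact absurd rfl hne
    | parR h1 hne => exact ⟨_, SStep.parR (SStep.parR h1 hne) hne, _, _, _, rfl, rfl⟩
    | commLR h1 h2 =>
      cases h1 with
      | parL h3 hne3 => exact ⟨_, SStep.commLR h3 (SStep.parR h2 (by simp)), _, _, _, rfl, rfl⟩
      | parR h3 hne3 => exact ⟨_, SStep.parR (SStep.commLR h3 h2) (by simp), _, _, _, rfl, rfl⟩
    | commRL h1 h2 =>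
      cases h1 with
      | parL h3 hne3 => exact ⟨_, SStep.commRL h3 (SStep.parR h2 (by simp)), _, _, _, rfl, rfl⟩
      | parR h3 hne3 => exact ⟨_, SStep.parR (SStep.commRL h3 h2) (by simp), _, _, _, rfl, rfl⟩
    | parTick h1 h2 => exact absurd rfl hμ
  · rintro X Y μ Y' ⟨A', B', C', rfl, rfl⟩ hμ hs
    cases hs with
    | parL h1 hne => exact ⟨_, SStep.parL (SStep.parL h1 hne) hne, _, _, _, rfl, rfl⟩
    | parR h1 hne =>
      cases h1 with
      | parL h2 hne2 => exact ⟨_, SStep.parL (SStep.parR h2 hne) hne, _, _, _, rfl, rfl⟩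
      | parR h2 hne2 => exact ⟨_, SStep.parR h2 hne, _, _, _, rfl, rfl⟩
      | commLR h2 h3 =>
        exact ⟨_, SStep.commLR (SStep.parR h2 (by simp)) h3, _, _, _, rfl, rfl⟩
      | commRL h2 h3 =>
        exact ⟨_, SStep.commRL (SStep.parR h2 (by simp)) h3, _, _, _, rfl, rfl⟩
      | parTick h2 h3 => exact absurd rfl hne
    | commLR h1 h2 =>
      cases h2 with
      | parL h3 hne3 => exact ⟨_, SStep.parL (SStep.commLR h1 h3) (by simp), _, _, _, rfl, rfl⟩
      | parR h3 hne3 => exact ⟨_, SStep.commLR (SStep.parL h1 (by simp)) h3, _, _, _, rfl, rfl⟩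
    | commRL h1 h2 =>
      cases h2 with
      | parL h3 hne3 => exact ⟨_, SStep.parL (SStep.commRL h1 h3) (by simp), _, _, _, rfl, rfl⟩
      | parR h3 hne3 => exact ⟨_, SStep.commRL (SStep.parL h1 (by simp)) h3, _, _, _, rfl, rfl⟩
    | parTick h1 h2 => exact absurd rfl hμ
  · rintro X Y ⟨A', B', C', rfl, rfl⟩ ht
    obtain ⟨hAB, ⟨C2, hC⟩⟩ := cantick_par ht
    obtain ⟨⟨A2, hA⟩, ⟨B2, hB⟩⟩ := cantick_par hAB
    exact ⟨_, SStep.parTick hA (SStep.parTick hB hC)⟩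
  · rintro X Y ⟨A', B', C', rfl, rfl⟩ ht
    obtain ⟨⟨A2, hA⟩, hBC⟩ := cantick_par ht
    obtain ⟨⟨B2, hB⟩, ⟨C2, hC⟩⟩ := cantick_par hBC
    exact ⟨_, SStep.parTick (SStep.parTick hA hB) hC⟩

/-- A dummy completed component is neutral. -/
lemma sequiv_unit (A : Sys) : SEquiv (.par A (.atom .one 0)) A := by
  refine ⟨fun X Y => X = .par Y (.atom .one 0), ⟨?_, ?_, ?_, ?_⟩, rfl⟩
  · rintro X Y μ X' rfl hμ hs
    cases hs with
    | parL h1 hne => exact ⟨_, h1, rfl⟩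
    | parR h1 hne =>
      cases h1 with
      | atomTau h2 => cases h2
      | atomInp h2 => cases h2
      | atomOut h2 => cases h2
      | atomTick h2 => exact absurd rfl hne
    | commLR h1 h2 =>
      cases h2 with
      | atomInp h3 => cases h3
    | commRL h1 h2 =>
      cases h2 with
      | atomOut h3 => cases h3
    | parTick h1 h2 => exact absurd rfl hμ
  · rintro X Y μ Y' rfl hμ hs
    exact ⟨_, SStep.parL hs hμ, rfl⟩
  · rintro X Y rfl ht
    exact (cantick_par ht).1
  · rintro X Y rfl ht
    obtain ⟨Y2, hY⟩ := ht
    exact ⟨_, SStep.parTick hY (SStep.atomTick OStep.one)⟩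

lemma sequiv_swap (A B C : Sys) :
    SEquiv (.par A (.par B C)) (.par B (.par A C)) :=
  sequiv_trans (sequiv_symm (sequiv_assoc A B C))
    (sequiv_trans (sequiv_parCongL (sequiv_comm A B) C) (sequiv_assoc B A C))

lemma sequiv_parCongR {A B : Sys} (h : SEquiv A B) (C : Sys) :
    SEquiv (.par C A) (.par C B) :=
  sequiv_trans (sequiv_comm C A)
    (sequiv_trans (sequiv_parCongL h C) (sequiv_comm B C))

/-- Pulling one located contract to the front of a composition. -/
lemma sequiv_cons (x : Orc × Role) (m : List (Orc × Role)) :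
    SEquiv (composeC (x :: m)) (.par (.atom x.1 x.2) (composeC m)) := by
  obtain ⟨C, l⟩ := x
  cases m with
  | nil => exact sequiv_symm (sequiv_unit _)
  | cons y ys => exact sequiv_refl _

lemma sequiv_mid (x : Orc × Role) (l₁ l₂ : List (Orc × Role)) :
    SEquiv (composeC (l₁ ++ x :: l₂)) (.par (.atom x.1 x.2) (composeC (l₁ ++ l₂))) := by
  induction l₁ with
  | nil => exact sequiv_cons x l₂
  | cons y l₁ ih =>
    refine sequiv_trans (sequiv_cons y (l₁ ++ x :: l₂)) ?_
    refine sequiv_trans (sequiv_parCongR ih (.atom y.1 y.2)) ?_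
    refine sequiv_trans (sequiv_swap (.atom y.1 y.2) (.atom x.1 x.2) (composeC (l₁ ++ l₂))) ?_
    exact sequiv_parCongR (sequiv_symm (sequiv_cons y (l₁ ++ l₂))) (.atom x.1 x.2)

/-! ### Transfer of correctness and weak traces along `SEquiv` -/

lemma sbisim_complete_fwd {R} (hb : SBisim R) {P Q P' : Sys} (hR : R P Q)
    (h : CompleteStep P P') : ∃ Q', CompleteStep Q Q' ∧ R P' Q' := by
  rcases h with h | ⟨a, r, s, h⟩
  · obtain ⟨Q', hs, hR'⟩ := hb.fwd hR (by simp) h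
    exact ⟨Q', Or.inl hs, hR'⟩
  · obtain ⟨Q', hs, hR'⟩ := hb.fwd hR (by simp) h
    exact ⟨Q', Or.inr ⟨a, r, s, hs⟩, hR'⟩

lemma sbisim_reach_fwd {R} (hb : SBisim R) {P Q P' : Sys} (hR : R P Q)
    (h : Reach P P') : ∃ Q', Reach Q Q' ∧ R P' Q' := by
  induction h generalizing Q with
  | refl => exact ⟨Q, Reach.refl _, hR⟩
  | step h1 _ ih =>
    obtain ⟨Q1, hs, hR1⟩ := sbisim_complete_fwd hb hR h1
    obtain ⟨Q', hre, hR'⟩ := ih hR1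
    exact ⟨Q', Reach.step hs hre, hR'⟩

lemma sequiv_correct {P Q : Sys} (he : SEquiv P Q) (h : Correct Q) : Correct P := by
  obtain ⟨R, hb, hR⟩ := he
  intro P' hre
  obtain ⟨Q', hreQ, hR'⟩ := sbisim_reach_fwd hb hR hre
  obtain ⟨Q'', hreQ', htick⟩ := h Q' hreQ
  have hb' : SBisim (fun a b => R b a) :=
    ⟨fun h hμ hs => hb.bwd h hμ hs, fun h hμ hs => hb.fwd h hμ hs,
     fun h ht => hb.tick_bwd h ht, fun h ht => hb.tick_fwd h ht⟩
  obtain ⟨P'', hreP, hR''⟩ := sbisim_reach_fwd hb' hR' hreQ'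
  exact ⟨P'', hreP, hb.tick_bwd hR'' htick⟩

lemma sequiv_wtrace {P Q : Sys} (he : SEquiv P Q) {w : List (AName × Role × Role)}
    (h : WTrace P w) : WTrace Q w := by
  obtain ⟨R, hb, hR⟩ := he
  induction h generalizing Q with
  | tick h1 => exact WTrace.tick (hb.tick_fwd hR h1)
  | tau h1 _ ih =>
    obtain ⟨Q1, hs, hR1⟩ := hb.fwd hR (by simp) h1
    exact WTrace.tau hs (ih hR1)
  | comm h1 _ ih =>
    obtain ⟨Q1, hs, hR1⟩ := hb.fwd hR (by simp) h1
    exact WTrace.comm hs (ih hR1)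
/-! ### Final assembly -/

lemma consonant_proj (H : Chor) (r : Role) : Consonant (proj H r) r H := by
  unfold Consonant NF
  rw [Finset.sdiff_self]
  show ShouldPre (restrict (proj H r) ∅) (proj H r)
  rw [restrict_empty]
  exact fun T h => h

/-- Projection pair of a located contract's role. -/
def ppD (H : Chor) (x : Orc × Role) : Orc × Role := (proj H x.2, x.2)

/-- Restriction pair of a located contract. -/
def rpD (H : Chor) (x : Orc × Role) : Orc × Role :=
  (restrict x.1 (inames x.1 \ inames (proj H x.2)), x.2)

lemma consonant_shouldPre {H : Chor} {x : Orc × Role} (h : Consonant x.1 x.2 H) :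
    ShouldPre (rpD H x).1 (ppD H x).1 := h

/-- Replacement of projections by consonant restricted contracts preserves
correctness. -/
lemma repl_correct (H : Chor) :
    ∀ (l₂ l₁ : List (Orc × Role)), (∀ x ∈ l₂, Consonant x.1 x.2 H) →
      Correct (composeC (l₁ ++ l₂.map (ppD H))) →
      Correct (composeC (l₁ ++ l₂.map (rpD H))) := by
  intro l₂
  induction l₂ with
  | nil => intro l₁ _ h; exact h
  | cons x l₂ ih =>
    intro l₁ hcons h
    simp only [List.map_cons] at h ⊢
    have h1 : Correct (.par (.atom (ppD H x).1 (ppD H x).2) (composeC (l₁ ++ l₂.map (ppD H)))) :=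
      sequiv_correct (sequiv_symm (sequiv_mid (ppD H x) l₁ (l₂.map (ppD H)))) h
    have h2 := shouldPre_correct (consonant_shouldPre (hcons x List.mem_cons_self))
      (ppD H x).2 _ h1
    have h3 : Correct (composeC (l₁ ++ (rpD H x) :: l₂.map (ppD H))) :=
      sequiv_correct (sequiv_mid (rpD H x) l₁ (l₂.map (ppD H))) h2
    have h4 := ih (l₁ ++ [rpD H x]) (fun y hy => hcons y (List.mem_cons_of_mem x hy))
      (by rw [List.append_cons] at h3; exact h3)
    rw [← List.append_cons] at h4
    exact h4

/-- Replacement of consonant restricted contracts by projections preserves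
weak traces. -/
lemma repl_wtrace (H : Chor) {w : List (AName × Role × Role)} :
    ∀ (l₂ l₁ : List (Orc × Role)), (∀ x ∈ l₂, Consonant x.1 x.2 H) →
      WTrace (composeC (l₁ ++ l₂.map (rpD H))) w →
      WTrace (composeC (l₁ ++ l₂.map (ppD H))) w := by
  intro l₂
  induction l₂ with
  | nil => intro l₁ _ h; exact h
  | cons x l₂ ih =>
    intro l₁ hcons h
    simp only [List.map_cons] at h ⊢
    have h1 := ih (l₁ ++ [rpD H x]) (fun y hy => hcons y (List.mem_cons_of_mem x hy))
      (by rw [← List.append_cons]; exact h)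
    rw [← List.append_cons] at h1
    have h2 : WTrace (.par (.atom (rpD H x).1 (rpD H x).2) (composeC (l₁ ++ l₂.map (ppD H)))) w :=
      sequiv_wtrace (sequiv_mid (rpD H x) l₁ (l₂.map (ppD H))) h1
    have h3 := shouldPre_wtrace (consonant_shouldPre (hcons x List.mem_cons_self))
      (ppD H x).2 _ h2
    exact sequiv_wtrace (sequiv_symm (sequiv_mid (ppD H x) l₁ (l₂.map (ppD H)))) h3

/-! ### Role lookup -/

def MfunD (H : Chor) (L : List (Orc × Role)) (s : Role) : Finset AName :=
  match L.find? (fun y => y.2 == s) with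
  | some y => inames y.1 \ inames (proj H y.2)
  | none => ∅

def baseD (H : Chor) (L : List (Orc × Role)) (r : Role) : Orc :=
  match L.find? (fun y => y.2 == r) with
  | some y => restrict y.1 (inames y.1 \ inames (proj H y.2))
  | none => .zero

lemma find_role {L : List (Orc × Role)} (hnd : (L.map Prod.snd).Nodup) {x : Orc × Role}
    (hx : x ∈ L) : L.find? (fun y => y.2 == x.2) = some x := by
  induction L with
  | nil => cases hx
  | cons z L ih =>
    simp only [List.map_cons, List.nodup_cons] at hnd
    rcases List.mem_cons.1 hx with rfl | hx
    · simp [List.find?]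
    · have hne : z.2 ≠ x.2 := by
        intro he; exact hnd.1 (he ▸ List.mem_map_of_mem (f := Prod.snd) hx)
      rw [List.find?_cons_of_neg (by simp [hne])]
      exact ih hnd.2 hx

lemma MfunD_eq {H : Chor} {L : List (Orc × Role)} (hnd : (L.map Prod.snd).Nodup)
    {x : Orc × Role} (hx : x ∈ L) :
    MfunD H L x.2 = inames x.1 \ inames (proj H x.2) := by
  unfold MfunD
  rw [find_role hnd hx]

lemma baseD_eq {H : Chor} {L : List (Orc × Role)} (hnd : (L.map Prod.snd).Nodup)
    {x : Orc × Role} (hx : x ∈ L) :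
    baseD H L x.2 = restrict x.1 (inames x.1 \ inames (proj H x.2)) := by
  unfold baseD
  rw [find_role hnd hx]

lemma oreach_zero_aux : ∀ {A D : Orc}, OReach A D → A = .zero → D = .zero := by
  intro A D h
  induction h with
  | refl => exact fun h => h
  | step h1 _ ih => rintro rfl; cases h1

lemma oreach_zero {D : Orc} (h : OReach .zero D) : D = .zero :=
  oreach_zero_aux h rfl

lemma leg_of_consonant (H : Chor) (L : List (Orc × Role))
    (hnd : (L.map Prod.snd).Nodup) (hcons : ∀ x ∈ L, Consonant x.1 x.2 H) :
    Leg (MfunD H L) (baseD H L) := by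
  intro r D D' a s hre hst hrs
  cases hfs : L.find? (fun y => y.2 == s) with
  | none => simp [MfunD, hfs]
  | some y =>
    have hyL : y ∈ L := List.mem_of_find?_eq_some hfs
    have hy2 : y.2 = s := by simpa using List.find?_some hfs
    cases hfr : L.find? (fun y => y.2 == r) with
    | none =>
      rw [show baseD H L r = .zero by unfold baseD; rw [hfr]] at hre
      rw [oreach_zero hre] at hst
      cases hst
    | some z =>
      have hzL : z ∈ L := List.mem_of_find?_eq_some hfr
      have hz2 : z.2 = r := by simpa using List.find?_some hfr
      rw [show baseD H L r = restrict z.1 (inames z.1 \ inames (proj H z.2)) by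
        unfold baseD; rw [hfr]] at hre
      obtain ⟨u, hu, hmem⟩ := oreach_out_trace hre hst
      have hu' : WOTrace (proj H z.2) u := shouldPre_trace (hcons z hzL) hu
      have hon : (a, s) ∈ onames2 (proj H z.2) := wotrace_out_mem hu' a s hmem
      have hin : a ∈ inames (proj H s) := proj_out_in (by rw [hz2]; exact hrs) hon
      have : MfunD H L s = inames y.1 \ inames (proj H y.2) := by
        unfold MfunD; rw [hfs]
      rw [this, Finset.mem_sdiff]
      rintro ⟨-, h2⟩
      exact h2 (by rw [hy2]; exact hin)

lemma corr_list (H : Chor) (L : List (Orc × Role)) (hnd : (L.map Prod.snd).Nodup) :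
    ∀ (L' : List (Orc × Role)), L' ≠ [] → (∀ x ∈ L', x ∈ L) →
      CorrR (MfunD H L) (baseD H L) (composeC L') (composeC (L'.map (rpD H))) := by
  intro L'
  induction L' with
  | nil => intro h; exact absurd rfl h
  | cons x tail ih =>
    intro _ hsub
    have hx : x ∈ L := hsub x List.mem_cons_self
    have hatom : CorrR (MfunD H L) (baseD H L) (.atom x.1 x.2)
        (.atom (rpD H x).1 (rpD H x).2) := by
      show CorrR _ _ _ (.atom (restrict x.1 (inames x.1 \ inames (proj H x.2))) x.2)
      rw [← MfunD_eq hnd hx]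
      exact CorrR.atom (by rw [MfunD_eq hnd hx, ← baseD_eq hnd hx]; exact OReach.refl _)
    cases tail with
    | nil =>
      show CorrR _ _ (.atom x.1 x.2) (.atom (rpD H x).1 (rpD H x).2)
      exact hatom
    | cons y ys =>
      exact CorrR.par hatom (ih (by simp) (fun z hz => hsub z (List.mem_cons_of_mem x hz)))

lemma rolesList_composeC : ∀ (L : List (Orc × Role)), L ≠ [] →
    rolesList (composeC L) = L.map Prod.snd := by
  intro L
  induction L with
  | nil => intro h; exact absurd rfl h
  | cons x tail ih =>
    intro _
    cases tail with
    | nil => simp [composeC, rolesList]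
    | cons y ys =>
      show rolesList (.par (.atom x.1 x.2) (composeC (y :: ys))) = _
      simp only [rolesList, List.map_cons]
      rw [ih (by simp)]
      rfl

/-- Given a well-formed choreography `H`, testing consonance
is a conformance relation; in particular every projection of `H` is consonant
with its own role. -/
theorem consonance_is_conformance (H : Chor) (hH : WellFormed H) :
    (∀ r ∈ rolesC H, Consonant (proj H r) r H) ∧
    ConformanceRel (fun C r => Consonant C r H) H := by
  refine ⟨fun r _ => consonant_proj H r,
    ⟨fun r _ => ⟨proj H r, consonant_proj H r⟩, ?_⟩⟩
  intro L hne hnd hcover hcons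
  have himpl := hH (L.map Prod.snd) hnd hcover
  have hmap : (L.map Prod.snd).map (fun r => (proj H r, r)) = L.map (ppD H) := by
    rw [List.map_map]; rfl
  rw [hmap] at himpl
  obtain ⟨hcorr_p, htr_p⟩ := himpl
  have hcons' : ∀ x ∈ L, Consonant x.1 x.2 H := hcons
  have hcorr_r : Correct (composeC (L.map (rpD H))) := by
    have := repl_correct H L [] hcons' (by simpa using hcorr_p)
    simpa using this
  have hleg := leg_of_consonant H L hnd hcons'
  have hcorrR := corr_list H L hnd L hne (fun z hz => hz)
  have hroles : rolesList (composeC L) = L.map Prod.snd := rolesList_composeC L hne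
  have hnodr : (rolesList (composeC L)).Nodup := by rw [hroles]; exact hnd
  constructor
  · exact corr_correct hleg hcorrR hnodr hcorr_r
  · intro w hw
    have h1 := corr_wtrace hleg hw hcorrR hnodr
    have h2 := repl_wtrace H L [] hcons' (by simpa using h1)
    exact htr_p w (by simpa using h2)
end

section
/- There is no maximal conformance relation. Concretely, for the well-formed choreography H = a_{r→s} | b_{r→s}: (i) there is a conformance relation ⊲¹ with (τ;ā_s | τ;b̄_s) ⊲¹_r H and (τ;a;b + τ;b;a) ⊲¹_s H; (ii) there is a conformance relation ⊲² with (τ;ā_s;τ;b̄_s + τ;b̄_s;τ;ā_s) ⊲²_r H and (a | b) ⊲²_s H; but (iii) the system [τ;ā_s;τ;b̄_s + τ;b̄_s;τ;ā_s]_r || [τ;a;b + τ;b;a]_s is not a correct composition, so no conformance relation contains the union of ⊲¹ and ⊲². -/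
/-- `τ;ā_s | τ;b̄_s` -/
def par_r (a b : AName) (s : Role) : Orc :=
  .par (.seq .tau (.out a s)) (.seq .tau (.out b s))

/-- `τ;a;b + τ;b;a` -/
def seq_s (a b : AName) : Orc :=
  .choice (.seq .tau (.seq (.inp a) (.inp b))) (.seq .tau (.seq (.inp b) (.inp a)))

/-- `τ;ā_s;τ;b̄_s + τ;b̄_s;τ;ā_s` -/
def seq_r (a b : AName) (s : Role) : Orc :=
  .choice (.seq .tau (.seq (.out a s) (.seq .tau (.out b s))))
          (.seq .tau (.seq (.out b s) (.seq .tau (.out a s))))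

/-- `a | b` -/
def par_s (a b : AName) : Orc := .par (.inp a) (.inp b)


/-! ### Executable successor functions -/

def osuccs : Orc → List (OLabel × Orc)
  | .zero => []
  | .one => [(.tick, .zero)]
  | .tau => [(.tau, .one)]
  | .inp a => [(.inp a, .one)]
  | .out a l => [(.out a l, .one)]
  | .choice C D => osuccs C ++ osuccs D
  | .seq C D =>
      ((osuccs C).filter fun x => x.1 ≠ .tick).map (fun x => (x.1, .seq x.2 D)) ++
      (if (osuccs C).any fun x => x.1 = .tick then osuccs D else [])
  | .par C D =>
      ((osuccs C).filter fun x => x.1 ≠ .tick).map (fun x => (x.1, .par x.2 D)) ++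
      ((osuccs D).filter fun x => x.1 ≠ .tick).map (fun x => (x.1, .par C x.2)) ++
      ((osuccs C).filter fun x => x.1 = .tick).flatMap
        (fun x => ((osuccs D).filter fun y => y.1 = .tick).map fun y => (.tick, .par x.2 y.2))
  | .star C => (.tick, .zero) ::
      ((osuccs C).filter fun x => x.1 ≠ .tick).map (fun x => (x.1, .seq x.2 (.star C)))

lemma osuccs_complete {C μ C'} (h : OStep C μ C') : (μ, C') ∈ osuccs C := by
  induction h with
  | one => simp [osuccs]
  | tau => simp [osuccs]
  | inp => simp [osuccs]
  | out => simp [osuccs]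
  | choiceL h ih => simp [osuccs]; exact Or.inl ih
  | choiceR h ih => simp [osuccs]; exact Or.inr ih
  | seqL h hne ih =>
      simp only [osuccs, List.mem_append, List.mem_map, List.mem_filter]
      exact Or.inl ⟨_, ⟨ih, by simpa using hne⟩, rfl⟩
  | seqTick h1 h2 ih1 ih2 =>
      simp only [osuccs, List.mem_append]
      right
      rw [if_pos]
      · exact ih2
      · simp only [List.any_eq_true]; exact ⟨_, ih1, by simp⟩
  | parL h hne ih =>
      simp only [osuccs, List.mem_append, List.mem_map, List.mem_filter]
      exact Or.inl (Or.inl ⟨_, ⟨ih, by simpa using hne⟩, rfl⟩)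
  | parR h hne ih =>
      simp only [osuccs, List.mem_append, List.mem_map, List.mem_filter]
      exact Or.inl (Or.inr ⟨_, ⟨ih, by simpa using hne⟩, rfl⟩)
  | parTick h1 h2 ih1 ih2 =>
      simp only [osuccs, List.mem_append, List.mem_flatMap, List.mem_map, List.mem_filter]
      exact Or.inr ⟨_, ⟨ih1, by simp⟩, _, ⟨ih2, by simp⟩, rfl⟩
  | starTick => simp [osuccs]
  | starStep h hne ih =>
      simp only [osuccs, List.mem_cons, List.mem_map, List.mem_filter]
      exact Or.inr ⟨_, ⟨ih, by simpa using hne⟩, rfl⟩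

lemma osuccs_sound : ∀ C {μ C'}, (μ, C') ∈ osuccs C → OStep C μ C' := by
  intro C
  induction C with
  | zero => intro μ C' h; simp [osuccs] at h
  | one => intro μ C' h; simp [osuccs] at h; rw [h.1, h.2]; exact .one
  | tau => intro μ C' h; simp [osuccs] at h; rw [h.1, h.2]; exact .tau
  | inp a => intro μ C' h; simp [osuccs] at h; rw [h.1, h.2]; exact .inp
  | out a l => intro μ C' h; simp [osuccs] at h; rw [h.1, h.2]; exact .out
  | choice C D ihC ihD =>
      intro μ C' h; simp only [osuccs, List.mem_append] at h
      rcases h with h | h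
      · exact .choiceL (ihC h)
      · exact .choiceR (ihD h)
  | seq C D ihC ihD =>
      intro μ C' h
      simp only [osuccs, List.mem_append, List.mem_map, List.mem_filter] at h
      rcases h with ⟨x, ⟨hx, hne⟩, hE⟩ | h
      · cases hE
        exact .seqL (ihC hx) (by simpa using hne)
      · split at h
        · rename_i hany
          simp only [List.any_eq_true, decide_eq_true_eq] at hany
          obtain ⟨y, hy, hyt⟩ := hany
          have := ihC hy
          rw [hyt] at this
          exact .seqTick this (ihD h)
        · simp at h
  | par C D ihC ihD =>
      intro μ C' h
      simp only [osuccs, List.mem_append, List.mem_flatMap, List.mem_map, List.mem_filter] at h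
      rcases h with (⟨x, ⟨hx, hne⟩, hE⟩ | ⟨x, ⟨hx, hne⟩, hE⟩) | ⟨x, ⟨hx, hxt⟩, y, ⟨hy, hyt⟩, hE⟩
      · cases hE; exact .parL (ihC hx) (by simpa using hne)
      · cases hE; exact .parR (ihD hx) (by simpa using hne)
      · cases hE
        simp only [decide_eq_true_eq] at hxt hyt
        have h1 := ihC hx; have h2 := ihD hy
        rw [hxt] at h1; rw [hyt] at h2
        exact .parTick h1 h2
  | star C ihC =>
      intro μ C' h
      simp only [osuccs, List.mem_cons, List.mem_map, List.mem_filter] at h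
      rcases h with h | ⟨x, ⟨hx, hne⟩, hE⟩
      · cases h; exact .starTick
      · cases hE; exact .starStep (ihC hx) (by simpa using hne)
def atomLbl (r : Role) : OLabel → SLabel
  | .tau => .tau
  | .inp a => .inp a r
  | .out a s => .out a r s
  | .tick => .tick

def commPair : SLabel → SLabel → List SLabel
  | .out a r s, .inp a' s' => if a = a' ∧ s = s' then [.comm a r s] else []
  | .inp a s, .out a' r s' => if a = a' ∧ s = s' then [.comm a' r s'] else []
  | _, _ => []

def ssuccs : Sys → List (SLabel × Sys)
  | .atom C r => (osuccs C).map (fun x => (atomLbl r x.1, .atom x.2 r))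
  | .par P Q =>
      ((ssuccs P).filter fun x => x.1 ≠ .tick).map (fun x => (x.1, .par x.2 Q)) ++
      ((ssuccs Q).filter fun x => x.1 ≠ .tick).map (fun x => (x.1, .par P x.2)) ++
      ((ssuccs P).filter fun x => x.1 = .tick).flatMap
        (fun x => ((ssuccs Q).filter fun y => y.1 = .tick).map fun y => (.tick, .par x.2 y.2)) ++
      (ssuccs P).flatMap (fun x => (ssuccs Q).flatMap (fun y =>
        (commPair x.1 y.1).map fun l => (l, .par x.2 y.2)))

lemma ssuccs_complete {P μ P'} (h : SStep P μ P') : (μ, P') ∈ ssuccs P := by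
  induction h with
  | atomTau h => exact List.mem_map.2 ⟨_, osuccs_complete h, rfl⟩
  | atomInp h => exact List.mem_map.2 ⟨_, osuccs_complete h, rfl⟩
  | atomOut h => exact List.mem_map.2 ⟨_, osuccs_complete h, rfl⟩
  | atomTick h => exact List.mem_map.2 ⟨_, osuccs_complete h, rfl⟩
  | parL h hne ih =>
      simp only [ssuccs, List.mem_append, List.mem_map, List.mem_filter]
      exact Or.inl (Or.inl (Or.inl ⟨_, ⟨ih, by simpa using hne⟩, rfl⟩))
  | parR h hne ih =>
      simp only [ssuccs, List.mem_append, List.mem_map, List.mem_filter]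
      exact Or.inl (Or.inl (Or.inr ⟨_, ⟨ih, by simpa using hne⟩, rfl⟩))
  | commLR h1 h2 ih1 ih2 =>
      simp only [ssuccs, List.mem_append, List.mem_flatMap, List.mem_map]
      exact Or.inr ⟨_, ih1, _, ih2, by simp [commPair]⟩
  | commRL h1 h2 ih1 ih2 =>
      simp only [ssuccs, List.mem_append, List.mem_flatMap, List.mem_map]
      exact Or.inr ⟨_, ih1, _, ih2, by simp [commPair]⟩
  | parTick h1 h2 ih1 ih2 =>
      simp only [ssuccs, List.mem_append, List.mem_flatMap, List.mem_map, List.mem_filter]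
      exact Or.inl (Or.inr ⟨_, ⟨ih1, by simp⟩, _, ⟨ih2, by simp⟩, rfl⟩)

lemma ssuccs_sound : ∀ P {μ P'}, (μ, P') ∈ ssuccs P → SStep P μ P' := by
  intro P
  induction P with
  | atom C r =>
      intro μ P' h
      simp only [ssuccs, List.mem_map] at h
      obtain ⟨x, hx, hE⟩ := h
      obtain ⟨hE1, hE2⟩ := Prod.mk.injEq .. ▸ hE
      subst hE1; subst hE2
      have hs := osuccs_sound C hx
      cases hμ : x.1 <;> rw [hμ] at hs <;> simp only [atomLbl]
      · exact .atomTau hs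
      · exact .atomInp hs
      · exact .atomOut hs
      · exact .atomTick hs
  | par P Q ihP ihQ =>
      intro μ P' h
      simp only [ssuccs, List.mem_append, List.mem_flatMap, List.mem_map, List.mem_filter] at h
      rcases h with ((⟨x, ⟨hx, hne⟩, hE⟩ | ⟨x, ⟨hx, hne⟩, hE⟩) |
          ⟨x, ⟨hx, hxt⟩, y, ⟨hy, hyt⟩, hE⟩) | ⟨x, hx, y, hy, l, hl, hE⟩
      · cases hE; exact .parL (ihP hx) (by simpa using hne)
      · cases hE; exact .parR (ihQ hx) (by simpa using hne)
      · cases hE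
        simp only [decide_eq_true_eq] at hxt hyt
        have h1 := ihP hx; have h2 := ihQ hy
        rw [hxt] at h1; rw [hyt] at h2
        exact .parTick h1 h2
      · cases hE
        have h1 := ihP hx; have h2 := ihQ hy
        revert hl
        cases hx1 : x.1 <;> cases hy1 : y.1 <;> simp only [commPair] <;> intro hl <;>
          first
          | exact absurd hl List.not_mem_nil
          | (rw [hx1] at h1; rw [hy1] at h2
             split at hl
             · rename_i hcond
               obtain ⟨rfl, rfl⟩ := hcond
               simp only [List.mem_singleton] at hl
               subst hl
               first
               | exact .commLR h1 h2
               | exact .commRL h1 h2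
             · exact absurd hl List.not_mem_nil)
def canTickB (P : Sys) : Bool := (ssuccs P).any fun x => x.1 = .tick

lemma canTickB_iff {P : Sys} : canTickB P = true ↔ CanTick P := by
  constructor
  · intro h
    simp only [canTickB, List.any_eq_true, decide_eq_true_eq] at h
    obtain ⟨x, hx, hxt⟩ := h
    exact ⟨x.2, hxt ▸ ssuccs_sound P hx⟩
  · rintro ⟨P', h⟩
    simp only [canTickB, List.any_eq_true, decide_eq_true_eq]
    exact ⟨_, ssuccs_complete h, rfl⟩

def csuccs (P : Sys) : List Sys :=
  (ssuccs P).filterMap fun x =>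
    match x.1 with
    | .tau => some x.2
    | .comm _ _ _ => some x.2
    | _ => none

lemma csuccs_sound {P Q : Sys} (h : Q ∈ csuccs P) : CompleteStep P Q := by
  simp only [csuccs, List.mem_filterMap] at h
  obtain ⟨x, hx, hQ⟩ := h
  have hs := ssuccs_sound P hx
  cases hμ : x.1 <;> rw [hμ] at hs hQ <;> simp at hQ
  · exact hQ ▸ Or.inl hs
  · exact hQ ▸ Or.inr ⟨_, _, _, hs⟩

lemma csuccs_complete {P Q : Sys} (h : CompleteStep P Q) : Q ∈ csuccs P := by
  simp only [csuccs, List.mem_filterMap]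
  rcases h with h | ⟨a, r, s, h⟩
  · exact ⟨_, ssuccs_complete h, rfl⟩
  · exact ⟨_, ssuccs_complete h, rfl⟩

lemma reach_mem_closed {L : List Sys} (hcl : ∀ Q ∈ L, ∀ X ∈ csuccs Q, X ∈ L)
    {P Q : Sys} (h : Reach P Q) (hP : P ∈ L) : Q ∈ L := by
  induction h with
  | refl => exact hP
  | step hs _ ih => exact ih (hcl _ hP _ (csuccs_complete hs))

lemma reach_trans {P Q R : Sys} (h1 : Reach P Q) (h2 : Reach Q R) : Reach P R := by
  induction h1 with
  | refl => exact h2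
  | step hs _ ih => exact .step hs (ih h2)

def closureStep (L : List Sys) : List Sys := (L ++ L.flatMap csuccs).dedup

def closureN : ℕ → List Sys → List Sys
  | 0, L => L
  | n+1, L => closureN n (closureStep L)

lemma closureN_sound {P : Sys} : ∀ (n : ℕ) (L : List Sys), (∀ Q ∈ L, Reach P Q) →
    ∀ Q ∈ closureN n L, Reach P Q := by
  intro n
  induction n with
  | zero => intro L h Q hQ; exact h Q hQ
  | succ n ih =>
      intro L h Q hQ
      refine ih _ ?_ Q hQ
      intro X hX
      simp only [closureStep, List.mem_dedup, List.mem_append, List.mem_flatMap] at hX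
      rcases hX with hX | ⟨Y, hY, hX⟩
      · exact h X hX
      · exact reach_trans (h Y hY) (.step (csuccs_sound hX) (.refl _))

def goodStep (L G : List Sys) : List Sys :=
  L.filter fun Q => canTickB Q || (csuccs Q).any fun X => X ∈ G

def goodN : ℕ → List Sys → List Sys → List Sys
  | 0, _, G => G
  | n+1, L, G => goodN n L (goodStep L G)

lemma goodN_sound : ∀ (n : ℕ) (L G : List Sys),
    (∀ Q ∈ G, ∃ Q'', Reach Q Q'' ∧ CanTick Q'') →
    ∀ Q ∈ goodN n L G, ∃ Q'', Reach Q Q'' ∧ CanTick Q'' := by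
  intro n
  induction n with
  | zero => intro L G h Q hQ; exact h Q hQ
  | succ n ih =>
      intro L G h Q hQ
      refine ih _ _ ?_ Q hQ
      intro X hX
      simp only [goodStep, List.mem_filter, Bool.or_eq_true, List.any_eq_true,
        decide_eq_true_eq] at hX
      rcases hX.2 with ht | ⟨Y, hY, hYG⟩
      · exact ⟨X, .refl _, canTickB_iff.1 ht⟩
      · obtain ⟨Q'', h1, h2⟩ := h Y hYG
        exact ⟨Q'', .step (csuccs_sound hY) h1, h2⟩

def checkCorrect (k : ℕ) (P : Sys) : Bool :=
  let L := closureN k [P]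
  decide (P ∈ L) && (L.all fun Q => (csuccs Q).all fun X => X ∈ L) &&
    (L.all fun Q => Q ∈ goodN k L [])

lemma correct_of_check {k : ℕ} {P : Sys} (h : checkCorrect k P = true) : Correct P := by
  simp only [checkCorrect, Bool.and_eq_true, List.all_eq_true, decide_eq_true_eq] at h
  obtain ⟨⟨hP, hcl⟩, hgood⟩ := h
  intro P' hr
  have hmem : P' ∈ closureN k [P] :=
    reach_mem_closed (fun Q hQ X hX => hcl Q hQ X hX) hr hP
  exact goodN_sound k _ [] (by simp) P' (hgood P' hmem)

def checkBad (k : ℕ) (P B : Sys) : Bool :=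
  decide (B ∈ closureN k [P]) &&
  (let M := closureN k [B]
   decide (B ∈ M) && (M.all fun Q => (csuccs Q).all fun X => X ∈ M) &&
     (M.all fun Q => !canTickB Q))

lemma not_correct_of_check {k : ℕ} {P B : Sys} (h : checkBad k P B = true) : ¬ Correct P := by
  simp only [checkBad, Bool.and_eq_true, List.all_eq_true, decide_eq_true_eq,
    Bool.not_eq_true'] at h
  obtain ⟨hreach, ⟨hB, hcl⟩, hnt⟩ := h
  intro hC
  have hRB : Reach P B := closureN_sound k [P] (by rintro Q hQ; simp at hQ; exact hQ ▸ .refl _) B hreach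
  obtain ⟨Q'', h1, h2⟩ := hC B hRB
  have : Q'' ∈ closureN k [B] := reach_mem_closed (fun Q hQ X hX => hcl Q hQ X hX) h1 hB
  have := hnt Q'' this
  rw [← canTickB_iff] at h2
  simp [h2] at this
def tauSuccs (P : Sys) : List Sys :=
  (ssuccs P).filterMap fun x => match x.1 with | .tau => some x.2 | _ => none

def commTargets (P : Sys) : List ((AName × Role × Role) × Sys) :=
  (ssuccs P).filterMap fun x => match x.1 with
    | .comm a r s => some ((a, r, s), x.2)
    | _ => none

lemma tauSuccs_complete {P Q : Sys} (h : SStep P .tau Q) : Q ∈ tauSuccs P := by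
  simp only [tauSuccs, List.mem_filterMap]
  exact ⟨_, ssuccs_complete h, rfl⟩

lemma commTargets_complete {P Q : Sys} {x u v} (h : SStep P (.comm x u v) Q) :
    ((x, u, v), Q) ∈ commTargets P := by
  simp only [commTargets, List.mem_filterMap]
  exact ⟨_, ssuccs_complete h, rfl⟩

def commSuccsL (l : AName × Role × Role) (P : Sys) : List Sys :=
  (commTargets P).filterMap fun x => if x.1 = l then some x.2 else none

def tclosStep (L : List Sys) : List Sys := (L ++ L.flatMap tauSuccs).dedup

def tclosN : ℕ → List Sys → List Sys
  | 0, L => L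
  | n+1, L => tclosN n (tclosStep L)

/-- The key simulation lemma: with lists satisfying the closure conditions,
every weak trace is fully determined. -/
lemma traces_aux {a b : AName} {r s : Role} {L0 La Lb Lab : List Sys}
    (h0 : ∀ Q ∈ L0, (∀ Q', SStep Q .tau Q' → Q' ∈ L0) ∧ ¬ CanTick Q ∧
      ∀ x u v Q', SStep Q (.comm x u v) Q' →
        ((x, u, v) = (a, r, s) ∧ Q' ∈ La) ∨ ((x, u, v) = (b, r, s) ∧ Q' ∈ Lb))
    (ha : ∀ Q ∈ La, (∀ Q', SStep Q .tau Q' → Q' ∈ La) ∧ ¬ CanTick Q ∧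
      ∀ x u v Q', SStep Q (.comm x u v) Q' → (x, u, v) = (b, r, s) ∧ Q' ∈ Lab)
    (hb : ∀ Q ∈ Lb, (∀ Q', SStep Q .tau Q' → Q' ∈ Lb) ∧ ¬ CanTick Q ∧
      ∀ x u v Q', SStep Q (.comm x u v) Q' → (x, u, v) = (a, r, s) ∧ Q' ∈ Lab)
    (hc : ∀ Q ∈ Lab, (∀ Q', SStep Q .tau Q' → Q' ∈ Lab) ∧
      ∀ x u v Q', ¬ SStep Q (.comm x u v) Q') :
    ∀ {Q w}, WTrace Q w →
      (Q ∈ L0 → w = [(a, r, s), (b, r, s)] ∨ w = [(b, r, s), (a, r, s)]) ∧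
      (Q ∈ La → w = [(b, r, s)]) ∧ (Q ∈ Lb → w = [(a, r, s)]) ∧ (Q ∈ Lab → w = []) := by
  intro Q w h
  induction h with
  | tick ht =>
      refine ⟨fun hm => absurd ht (h0 _ hm).2.1, fun hm => absurd ht (ha _ hm).2.1,
        fun hm => absurd ht (hb _ hm).2.1, fun _ => rfl⟩
  | tau hs _ ih =>
      exact ⟨fun hm => ih.1 ((h0 _ hm).1 _ hs), fun hm => ih.2.1 ((ha _ hm).1 _ hs),
        fun hm => ih.2.2.1 ((hb _ hm).1 _ hs), fun hm => ih.2.2.2 ((hc _ hm).1 _ hs)⟩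
  | comm hs _ ih =>
      refine ⟨?_, ?_, ?_, ?_⟩
      · intro hm
        rcases (h0 _ hm).2.2 _ _ _ _ hs with ⟨he, hm'⟩ | ⟨he, hm'⟩
        · left; rw [he, ih.2.1 hm']
        · right; rw [he, ih.2.2.1 hm']
      · intro hm
        obtain ⟨he, hm'⟩ := (ha _ hm).2.2 _ _ _ _ hs
        rw [he, ih.2.2.2 hm']
      · intro hm
        obtain ⟨he, hm'⟩ := (hb _ hm).2.2 _ _ _ _ hs
        rw [he, ih.2.2.2 hm']
      · intro hm
        exact absurd hs ((hc _ hm).2 _ _ _ _)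

def classChecks (a b : AName) (r s : Role) (L0 La Lb Lab : List Sys) : Bool :=
  (L0.all fun Q => ((tauSuccs Q).all fun X => X ∈ L0) && !canTickB Q &&
    ((commTargets Q).all fun x =>
      (decide (x.1 = (a, r, s)) && decide (x.2 ∈ La)) ||
      (decide (x.1 = (b, r, s)) && decide (x.2 ∈ Lb)))) &&
  (La.all fun Q => ((tauSuccs Q).all fun X => X ∈ La) && !canTickB Q &&
    ((commTargets Q).all fun x => decide (x.1 = (b, r, s)) && decide (x.2 ∈ Lab))) &&
  (Lb.all fun Q => ((tauSuccs Q).all fun X => X ∈ Lb) && !canTickB Q &&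
    ((commTargets Q).all fun x => decide (x.1 = (a, r, s)) && decide (x.2 ∈ Lab))) &&
  (Lab.all fun Q => ((tauSuccs Q).all fun X => X ∈ Lab) && (commTargets Q).isEmpty)

def checkTr (k : ℕ) (P : Sys) (a b : AName) (r s : Role) : Bool :=
  let L0 := tclosN k [P]
  let La := tclosN k (L0.flatMap (commSuccsL (a, r, s)))
  let Lb := tclosN k (L0.flatMap (commSuccsL (b, r, s)))
  let Lab := tclosN k (La.flatMap (commSuccsL (b, r, s)) ++ Lb.flatMap (commSuccsL (a, r, s)))
  decide (P ∈ L0) && classChecks a b r s L0 La Lb Lab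

lemma traces_of_classChecks {a b : AName} {r s : Role} {L0 La Lb Lab : List Sys}
    (h : classChecks a b r s L0 La Lb Lab = true) {P : Sys} (hP : P ∈ L0) :
    ∀ w, WTrace P w → w = [(a, r, s), (b, r, s)] ∨ w = [(b, r, s), (a, r, s)] := by
  simp only [classChecks, Bool.and_eq_true, List.all_eq_true, Bool.or_eq_true,
    decide_eq_true_eq, Bool.not_eq_true'] at h
  obtain ⟨⟨⟨h0, ha⟩, hb⟩, hc⟩ := h
  intro w hw
  refine (traces_aux (a := a) (b := b) (r := r) (s := s)
    (La := La) (Lb := Lb) (Lab := Lab) ?_ ?_ ?_ ?_ hw).1 hP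
  · intro Q hQ
    obtain ⟨⟨ht, hnt⟩, hcm⟩ := h0 Q hQ
    refine ⟨fun Q' hs => ht _ (tauSuccs_complete hs), ?_, ?_⟩
    · rw [← canTickB_iff]; simp [hnt]
    · intro x u v Q' hs
      exact hcm _ (commTargets_complete hs)
  · intro Q hQ
    obtain ⟨⟨ht, hnt⟩, hcm⟩ := ha Q hQ
    refine ⟨fun Q' hs => ht _ (tauSuccs_complete hs), ?_, ?_⟩
    · rw [← canTickB_iff]; simp [hnt]
    · intro x u v Q' hs
      exact hcm _ (commTargets_complete hs)
  · intro Q hQ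
    obtain ⟨⟨ht, hnt⟩, hcm⟩ := hb Q hQ
    refine ⟨fun Q' hs => ht _ (tauSuccs_complete hs), ?_, ?_⟩
    · rw [← canTickB_iff]; simp [hnt]
    · intro x u v Q' hs
      exact hcm _ (commTargets_complete hs)
  · intro Q hQ
    obtain ⟨ht, he⟩ := hc Q hQ
    refine ⟨fun Q' hs => ht _ (tauSuccs_complete hs), ?_⟩
    intro x u v Q' hs
    have := commTargets_complete hs
    rw [List.isEmpty_iff] at he
    simp [he] at this

lemma traces_of_check {k : ℕ} {P : Sys} {a b : AName} {r s : Role}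
    (h : checkTr k P a b r s = true) :
    ∀ w, WTrace P w → w = [(a, r, s), (b, r, s)] ∨ w = [(b, r, s), (a, r, s)] := by
  simp only [checkTr, Bool.and_eq_true, decide_eq_true_eq] at h
  exact traces_of_classChecks h.2 h.1
/-! ### Renaming of names and roles -/

def mapO (f g : ℕ → ℕ) : Orc → Orc
  | .zero => .zero
  | .one => .one
  | .tau => .tau
  | .inp a => .inp (f a)
  | .out a l => .out (f a) (g l)
  | .seq C D => .seq (mapO f g C) (mapO f g D)
  | .choice C D => .choice (mapO f g C) (mapO f g D)
  | .par C D => .par (mapO f g C) (mapO f g D)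
  | .star C => .star (mapO f g C)

def mapOL (f g : ℕ → ℕ) : OLabel → OLabel
  | .tau => .tau
  | .inp a => .inp (f a)
  | .out a l => .out (f a) (g l)
  | .tick => .tick

def mapS (f g : ℕ → ℕ) : Sys → Sys
  | .atom C r => .atom (mapO f g C) (g r)
  | .par P Q => .par (mapS f g P) (mapS f g Q)

def mapC (f g : ℕ → ℕ) : Chor → Chor
  | .comm a r s => .comm (f a) (g r) (g s)
  | .choice H L => .choice (mapC f g H) (mapC f g L)
  | .seq H L => .seq (mapC f g H) (mapC f g L)
  | .par H L => .par (mapC f g H) (mapC f g L)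
  | .star H => .star (mapC f g H)
  | .one => .one
  | .zero => .zero

lemma mapOL_tick_iff {f g : ℕ → ℕ} {μ : OLabel} : mapOL f g μ = .tick ↔ μ = .tick := by
  cases μ <;> simp [mapOL]

lemma ostep_map {f g : ℕ → ℕ} {C μ C'} (h : OStep C μ C') :
    OStep (mapO f g C) (mapOL f g μ) (mapO f g C') := by
  induction h with
  | one => exact .one
  | tau => exact .tau
  | inp => exact .inp
  | out => exact .out
  | choiceL _ ih => exact .choiceL ih
  | choiceR _ ih => exact .choiceR ih
  | seqL _ hne ih => exact .seqL ih (fun hc => hne (mapOL_tick_iff.1 hc))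
  | seqTick _ _ ih1 ih2 => exact .seqTick ih1 ih2
  | parL _ hne ih => exact .parL ih (fun hc => hne (mapOL_tick_iff.1 hc))
  | parR _ hne ih => exact .parR ih (fun hc => hne (mapOL_tick_iff.1 hc))
  | parTick _ _ ih1 ih2 => exact .parTick ih1 ih2
  | starTick => exact .starTick
  | starStep _ hne ih => exact .starStep ih (fun hc => hne (mapOL_tick_iff.1 hc))

def mapSL (f g : ℕ → ℕ) : SLabel → SLabel
  | .tau => .tau
  | .inp a s => .inp (f a) (g s)
  | .out a r s => .out (f a) (g r) (g s)
  | .comm a r s => .comm (f a) (g r) (g s)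
  | .tick => .tick

lemma mapSL_tick_iff {f g : ℕ → ℕ} {μ : SLabel} : mapSL f g μ = .tick ↔ μ = .tick := by
  cases μ <;> simp [mapSL]

lemma sstep_map {f g : ℕ → ℕ} {P μ P'} (h : SStep P μ P') :
    SStep (mapS f g P) (mapSL f g μ) (mapS f g P') := by
  induction h with
  | atomTau h => exact .atomTau (ostep_map (f := f) (g := g) h)
  | atomInp h => exact .atomInp (ostep_map (f := f) (g := g) h)
  | atomOut h => exact .atomOut (ostep_map (f := f) (g := g) h)
  | atomTick h => exact .atomTick (ostep_map (f := f) (g := g) h)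
  | parL _ hne ih => exact .parL ih (fun hc => hne (mapSL_tick_iff.1 hc))
  | parR _ hne ih => exact .parR ih (fun hc => hne (mapSL_tick_iff.1 hc))
  | commLR _ _ ih1 ih2 => exact .commLR ih1 ih2
  | commRL _ _ ih1 ih2 => exact .commRL ih1 ih2
  | parTick _ _ ih1 ih2 => exact .parTick ih1 ih2

def mapCL (f g : ℕ → ℕ) : CLabel → CLabel
  | .comm a r s => .comm (f a) (g r) (g s)
  | .tick => .tick

lemma mapCL_tick_iff {f g : ℕ → ℕ} {η : CLabel} : mapCL f g η = .tick ↔ η = .tick := by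
  cases η <;> simp [mapCL]

lemma cstep_map {f g : ℕ → ℕ} {H η H'} (h : CStep H η H') :
    CStep (mapC f g H) (mapCL f g η) (mapC f g H') := by
  induction h with
  | comm => exact .comm
  | one => exact .one
  | starTick => exact .starTick
  | choiceL _ ih => exact .choiceL ih
  | choiceR _ ih => exact .choiceR ih
  | seqL _ hne ih => exact .seqL ih (fun hc => hne (mapCL_tick_iff.1 hc))
  | seqTick _ _ ih1 ih2 => exact .seqTick ih1 ih2
  | parL _ hne ih => exact .parL ih (fun hc => hne (mapCL_tick_iff.1 hc))
  | parR _ hne ih => exact .parR ih (fun hc => hne (mapCL_tick_iff.1 hc))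
  | parTick _ _ ih1 ih2 => exact .parTick ih1 ih2
  | starStep _ hne ih => exact .starStep ih (fun hc => hne (mapCL_tick_iff.1 hc))

lemma mapO_mapO {f g f' g' : ℕ → ℕ} (hf : ∀ n, f' (f n) = n) (hg : ∀ n, g' (g n) = n) :
    ∀ C, mapO f' g' (mapO f g C) = C := by
  intro C
  induction C <;> simp [mapO, hf, hg, *]

lemma mapS_mapS {f g f' g' : ℕ → ℕ} (hf : ∀ n, f' (f n) = n) (hg : ∀ n, g' (g n) = n) :
    ∀ P, mapS f' g' (mapS f g P) = P := by
  intro P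
  induction P <;> simp [mapS, mapO_mapO hf hg, hg, *]

lemma mapC_mapC {f g f' g' : ℕ → ℕ} (hf : ∀ n, f' (f n) = n) (hg : ∀ n, g' (g n) = n) :
    ∀ H, mapC f' g' (mapC f g H) = H := by
  intro H
  induction H <;> simp [mapC, hf, hg, *]

lemma completeStep_map {f g : ℕ → ℕ} {P P'} (h : CompleteStep P P') :
    CompleteStep (mapS f g P) (mapS f g P') := by
  rcases h with h | ⟨a, r, s, h⟩
  · exact Or.inl (sstep_map h)
  · exact Or.inr ⟨f a, g r, g s, sstep_map h⟩

lemma reach_map {f g : ℕ → ℕ} {P P'} (h : Reach P P') :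
    Reach (mapS f g P) (mapS f g P') := by
  induction h with
  | refl => exact .refl _
  | step hs _ ih => exact .step (completeStep_map hs) ih

lemma canTick_map {f g : ℕ → ℕ} {P} (h : CanTick P) : CanTick (mapS f g P) := by
  obtain ⟨P', h⟩ := h
  exact ⟨mapS f g P', sstep_map (f := f) (g := g) h⟩

lemma correct_unmap {f g f' g' : ℕ → ℕ} (hf : ∀ n, f' (f n) = n) (hg : ∀ n, g' (g n) = n)
    {P} (h : Correct (mapS f g P)) : Correct P := by
  intro P' hr
  obtain ⟨Q, hQ, ht⟩ := h (mapS f g P') (reach_map hr)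
  refine ⟨mapS f' g' Q, ?_, canTick_map ht⟩
  have := reach_map (f := f') (g := g') hQ
  rwa [mapS_mapS hf hg] at this

lemma wtrace_map {f g : ℕ → ℕ} {P w} (h : WTrace P w) :
    WTrace (mapS f g P) (w.map fun x => (f x.1, g x.2.1, g x.2.2)) := by
  induction h with
  | tick ht => exact .tick (canTick_map ht)
  | tau hs _ ih => exact .tau (sstep_map hs) ih
  | comm hs _ ih => exact .comm (sstep_map hs) ih

lemma ctrace_map {f g : ℕ → ℕ} {H w} (h : CTrace H w) :
    CTrace (mapC f g H) (w.map fun x => (f x.1, g x.2.1, g x.2.2)) := by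
  induction h with
  | tick ht => exact .tick (cstep_map (f := f) (g := g) ht)
  | comm hs _ ih => exact .comm (cstep_map (f := f) (g := g) hs) ih

lemma implements_unmap {f g f' g' : ℕ → ℕ} (hf : ∀ n, f' (f n) = n) (hg : ∀ n, g' (g n) = n)
    {P H} (h : Implements (mapS f g P) (mapC f g H)) : Implements P H := by
  refine ⟨correct_unmap hf hg h.1, ?_⟩
  intro w hw
  have := ctrace_map (f := f') (g := g') (h.2 _ (wtrace_map (f := f) (g := g) hw))
  rw [mapC_mapC hf hg, List.map_map] at this
  have hid : List.map ((fun x : AName × Role × Role => (f' x.1, g' x.2.1, g' x.2.2)) ∘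
      fun x => (f x.1, g x.2.1, g x.2.2)) w = w := by
    rw [show ((fun x : AName × Role × Role => (f' x.1, g' x.2.1, g' x.2.2)) ∘
        fun x => (f x.1, g x.2.1, g x.2.2)) = id from funext fun x => by
      simp [Function.comp, hf, hg]]
    exact List.map_id w
  rwa [hid] at this

lemma correct_map_iff {f g f' g' : ℕ → ℕ} (hf : ∀ n, f' (f n) = n) (hg : ∀ n, g' (g n) = n)
    (hf' : ∀ n, f (f' n) = n) (hg' : ∀ n, g (g' n) = n) {P} :
    Correct (mapS f g P) ↔ Correct P := by
  constructor
  · exact correct_unmap hf hg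
  · intro h
    have : Correct (mapS f' g' (mapS f g P)) := by rwa [mapS_mapS hf hg]
    exact correct_unmap hf' hg' (P := mapS f g P) this

lemma exists_perm (x y : ℕ) (h : x ≠ y) : ∃ e : ℕ ≃ ℕ, e x = 0 ∧ e y = 1 := by
  set t1 := Equiv.swap x 0 with ht1
  have hy' : t1 y ≠ 0 := by
    intro hc
    apply h
    have h2 := congrArg t1.symm hc
    simp only [ht1, Equiv.symm_apply_apply, Equiv.symm_swap, Equiv.swap_apply_self, Equiv.swap_apply_right] at h2
    exact h2.symm
  refine ⟨t1.trans (Equiv.swap (t1 y) 1), ?_, ?_⟩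
  · simp only [Equiv.trans_apply, ht1, Equiv.swap_apply_left]
    rw [← ht1]
    exact Equiv.swap_apply_of_ne_of_ne (Ne.symm hy') (by norm_num)
  · simp only [Equiv.trans_apply, Equiv.swap_apply_left]
/-! ### Concrete instances (names 0, 1; roles 0, 1) -/

def Pp : Sys := .par (.atom (.par (.out 0 1) (.out 1 1)) 0) (.atom (.par (.inp 0) (.inp 1)) 1)
def Pp' : Sys := .par (.atom (.par (.inp 0) (.inp 1)) 1) (.atom (.par (.out 0 1) (.out 1 1)) 0)
def P1 : Sys := .par (.atom (par_r 0 1 1) 0) (.atom (seq_s 0 1) 1)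
def P1' : Sys := .par (.atom (seq_s 0 1) 1) (.atom (par_r 0 1 1) 0)
def P2 : Sys := .par (.atom (seq_r 0 1 1) 0) (.atom (par_s 0 1) 1)
def P2' : Sys := .par (.atom (par_s 0 1) 1) (.atom (seq_r 0 1 1) 0)
def Pbad : Sys := .par (.atom (seq_r 0 1 1) 0) (.atom (seq_s 0 1) 1)
def Bst : Sys := .par (.atom (.seq .one (.seq (.out 0 1) (.seq .tau (.out 1 1)))) 0)
    (.atom (.seq .one (.seq (.inp 1) (.inp 0))) 1)

set_option maxRecDepth 100000 in
lemma check_Pp : checkCorrect 12 Pp = true := by decide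
set_option maxRecDepth 100000 in
lemma check_Pp' : checkCorrect 12 Pp' = true := by decide
set_option maxRecDepth 100000 in
lemma check_P1 : checkCorrect 12 P1 = true := by decide
set_option maxRecDepth 100000 in
lemma check_P1' : checkCorrect 12 P1' = true := by decide
set_option maxRecDepth 100000 in
lemma check_P2 : checkCorrect 12 P2 = true := by decide
set_option maxRecDepth 100000 in
lemma check_P2' : checkCorrect 12 P2' = true := by decide
set_option maxRecDepth 100000 in
lemma checkTr_Pp : checkTr 12 Pp 0 1 0 1 = true := by decide
set_option maxRecDepth 100000 in
lemma checkTr_Pp' : checkTr 12 Pp' 0 1 0 1 = true := by decide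
set_option maxRecDepth 100000 in
lemma checkTr_P1 : checkTr 12 P1 0 1 0 1 = true := by decide
set_option maxRecDepth 100000 in
lemma checkTr_P1' : checkTr 12 P1' 0 1 0 1 = true := by decide
set_option maxRecDepth 100000 in
lemma checkTr_P2 : checkTr 12 P2 0 1 0 1 = true := by decide
set_option maxRecDepth 100000 in
lemma checkTr_P2' : checkTr 12 P2' 0 1 0 1 = true := by decide
set_option maxRecDepth 100000 in
lemma check_Pbad : checkBad 12 Pbad Bst = true := by decide
lemma ctrace_ab {a b : AName} {r s : Role} :
    CTrace (.par (.comm a r s) (.comm b r s)) [(a, r, s), (b, r, s)] :=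
  .comm (CStep.parL .comm nofun) (.comm (CStep.parR .comm nofun) (.tick (CStep.parTick .one .one)))

lemma ctrace_ba {a b : AName} {r s : Role} :
    CTrace (.par (.comm a r s) (.comm b r s)) [(b, r, s), (a, r, s)] :=
  .comm (CStep.parR .comm nofun) (.comm (CStep.parL .comm nofun) (.tick (CStep.parTick .one .one)))

lemma implements_transfer {f g : ℕ ≃ ℕ} {a b : AName} {r s : Role} {P P0 : Sys}
    (ha : f a = 0) (hb : f b = 1) (hr : g r = 0) (hs : g s = 1)
    (hP : mapS f g P = P0)
    (hcor : checkCorrect 12 P0 = true) (htr : checkTr 12 P0 0 1 0 1 = true) :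
    Implements P (.par (.comm a r s) (.comm b r s)) := by
  have hf : ∀ n, f.symm (f n) = n := f.symm_apply_apply
  have hg : ∀ n, g.symm (g n) = n := g.symm_apply_apply
  constructor
  · refine correct_unmap (f := f) (g := g) hf hg ?_
    rw [hP]; exact correct_of_check hcor
  · intro w hw
    have hw0 := wtrace_map (f := f) (g := g) hw
    rw [hP] at hw0
    have hw' := traces_of_check htr _ hw0
    have hwid : List.map (fun x : AName × Role × Role => (f.symm x.1, g.symm x.2.1, g.symm x.2.2))
        (List.map (fun x => (f x.1, g x.2.1, g x.2.2)) w) = w := by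
      rw [List.map_map, show ((fun x : AName × Role × Role =>
          (f.symm x.1, g.symm x.2.1, g.symm x.2.2)) ∘
          fun x => (f x.1, g x.2.1, g x.2.2)) = id from funext fun x => by simp, List.map_id]
    have ha' : f.symm 0 = a := by rw [← ha, hf]
    have hb' : f.symm 1 = b := by rw [← hb, hf]
    have hr' : g.symm 0 = r := by rw [← hr, hg]
    have hs' : g.symm 1 = s := by rw [← hs, hg]
    rcases hw' with he | he
    · rw [he] at hwid
      simp only [List.map_cons, List.map_nil, ha', hb', hr', hs'] at hwid
      rw [← hwid]
      exact ctrace_ab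
    · rw [he] at hwid
      simp only [List.map_cons, List.map_nil, ha', hb', hr', hs'] at hwid
      rw [← hwid]
      exact ctrace_ba

lemma list_pair {r s : ℕ} (hrs : r ≠ s) :
    ∀ {L : List ℕ}, L.Nodup → L.toFinset = {r, s} → L = [r, s] ∨ L = [s, r] := by
  intro L hnd h
  have hlen : L.length = 2 := by
    rw [← List.toFinset_card_of_nodup hnd, h]
    rw [Finset.card_insert_of_notMem (by simp [hrs]), Finset.card_singleton]
  obtain ⟨x, y, rfl⟩ := List.length_eq_two.1 hlen
  have hx : x ∈ ({r, s} : Finset ℕ) := h ▸ by simp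
  have hy : y ∈ ({r, s} : Finset ℕ) := h ▸ by simp
  simp only [Finset.mem_insert, Finset.mem_singleton] at hx hy
  have hxy : x ≠ y := by simp [List.nodup_cons] at hnd; exact hnd
  rcases hx with rfl | rfl <;> rcases hy with rfl | rfl <;> simp_all

lemma conf_pair {r s : ℕ} (hrs : r ≠ s) {Cr Cs : Orc} {L : List (Orc × ℕ)}
    (hnd : (L.map Prod.snd).Nodup) (hfin : (L.map Prod.snd).toFinset = {r, s})
    (hall : ∀ x ∈ L, (x.1 = Cr ∧ x.2 = r) ∨ (x.1 = Cs ∧ x.2 = s)) :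
    L = [(Cr, r), (Cs, s)] ∨ L = [(Cs, s), (Cr, r)] := by
  have hlen : L.length = 2 := by
    have h2 := list_pair hrs hnd hfin
    rcases h2 with hL | hL <;> simpa using congrArg List.length hL
  obtain ⟨x, y, rfl⟩ := List.length_eq_two.1 hlen
  rcases list_pair hrs hnd hfin with hL | hL <;>
    simp only [List.map_cons, List.map_nil, List.cons.injEq, and_true] at hL <;>
    obtain ⟨hx2, hy2⟩ := hL <;>
    have hx := hall x (by simp) <;> have hy := hall y (by simp)
  · left
    rcases hx with ⟨hx1, -⟩ | ⟨-, hc⟩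
    · rcases hy with ⟨-, hc⟩ | ⟨hy1, -⟩
      · rw [hy2] at hc; exact absurd hc.symm hrs
      · rw [show x = (Cr, r) from Prod.ext_iff.2 ⟨hx1, hx2⟩,
          show y = (Cs, s) from Prod.ext_iff.2 ⟨hy1, hy2⟩]
    · rw [hx2] at hc; exact absurd hc hrs
  · right
    rcases hx with ⟨-, hc⟩ | ⟨hx1, -⟩
    · rw [hx2] at hc; exact absurd hc.symm hrs
    · rcases hy with ⟨hy1, -⟩ | ⟨-, hc⟩
      · rw [show x = (Cs, s) from Prod.ext_iff.2 ⟨hx1, hx2⟩,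
          show y = (Cr, r) from Prod.ext_iff.2 ⟨hy1, hy2⟩]
      · rw [hy2] at hc; exact absurd hc hrs

/-- There is no maximal conformance relation: for the
well-formed choreography `H = a_{r→s} | b_{r→s}` there are conformance
relations `⊲¹` and `⊲²` as indicated, but `[τ;ā_s;τ;b̄_s + τ;b̄_s;τ;ā_s]_r ||
[τ;a;b + τ;b;a]_s` is not correct, so no conformance relation contains the
union of `⊲¹` and `⊲²`. -/
theorem no_maximal_conformance_relation
    (a b : AName) (r s : Role) (hab : a ≠ b) (hrs : r ≠ s) :
    WellFormed (.par (.comm a r s) (.comm b r s)) ∧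
    (∃ R : Orc → Role → Prop, ConformanceRel R (.par (.comm a r s) (.comm b r s)) ∧
        R (par_r a b s) r ∧ R (seq_s a b) s) ∧
    (∃ R : Orc → Role → Prop, ConformanceRel R (.par (.comm a r s) (.comm b r s)) ∧
        R (seq_r a b s) r ∧ R (par_s a b) s) ∧
    ¬ Correct (.par (.atom (seq_r a b s) r) (.atom (seq_s a b) s)) ∧
    (∀ R : Orc → Role → Prop, ConformanceRel R (.par (.comm a r s) (.comm b r s)) →
      ¬ (R (seq_r a b s) r ∧ R (seq_s a b) s)) := by
  obtain ⟨f, hfa, hfb⟩ := exists_perm a b hab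
  obtain ⟨g, hgr, hgs⟩ := exists_perm r s hrs
  have hsr : s ≠ r := hrs.symm
  have hroles : rolesC (Chor.par (.comm a r s) (.comm b r s)) = {r, s} := by
    simp [rolesC]
  have hprojr : proj (Chor.par (.comm a r s) (.comm b r s)) r = .par (.out a s) (.out b s) := by
    simp [proj]
  have hprojs : proj (Chor.par (.comm a r s) (.comm b r s)) s = .par (.inp a) (.inp b) := by
    simp [proj, hsr]
  have hnc : ¬ Correct (.par (.atom (seq_r a b s) r) (.atom (seq_s a b) s)) := by
    intro hc
    apply not_correct_of_check check_Pbad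
    have hmap : mapS f g (.par (.atom (seq_r a b s) r) (.atom (seq_s a b) s)) = Pbad := by
      simp [mapS, mapO, seq_r, seq_s, Pbad, hfa, hfb, hgr, hgs]
    rw [← hmap]
    exact (correct_map_iff f.symm_apply_apply g.symm_apply_apply
      f.apply_symm_apply g.apply_symm_apply).2 hc
  refine ⟨?_, ?_, ?_, hnc, ?_⟩
  · -- Well-formedness
    intro L hnd hfin
    rw [hroles] at hfin
    rcases list_pair hrs hnd hfin with rfl | rfl
    · simp only [List.map_cons, List.map_nil, hprojr, hprojs, composeC]
      exact implements_transfer hfa hfb hgr hgs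
        (by simp [mapS, mapO, Pp, hfa, hfb, hgr, hgs]) check_Pp checkTr_Pp
    · simp only [List.map_cons, List.map_nil, hprojr, hprojs, composeC]
      exact implements_transfer hfa hfb hgr hgs
        (by simp [mapS, mapO, Pp', hfa, hfb, hgr, hgs]) check_Pp' checkTr_Pp'
  · -- first conformance relation
    refine ⟨fun C t => (C = par_r a b s ∧ t = r) ∨ (C = seq_s a b ∧ t = s),
      ⟨?_, ?_⟩, Or.inl ⟨rfl, rfl⟩, Or.inr ⟨rfl, rfl⟩⟩
    · intro t ht
      rw [hroles] at ht
      simp only [Finset.mem_insert, Finset.mem_singleton] at ht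
      rcases ht with rfl | rfl
      · exact ⟨par_r a b s, Or.inl ⟨rfl, rfl⟩⟩
      · exact ⟨seq_s a b, Or.inr ⟨rfl, rfl⟩⟩
    · intro L hne hnd hfin hall
      rw [hroles] at hfin
      rcases conf_pair hrs hnd hfin hall with rfl | rfl
      · simp only [composeC]
        exact implements_transfer hfa hfb hgr hgs
          (by simp [mapS, mapO, par_r, seq_s, P1, hfa, hfb, hgr, hgs]) check_P1 checkTr_P1
      · simp only [composeC]
        exact implements_transfer hfa hfb hgr hgs
          (by simp [mapS, mapO, par_r, seq_s, P1', hfa, hfb, hgr, hgs]) check_P1' checkTr_P1'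
  · -- second conformance relation
    refine ⟨fun C t => (C = seq_r a b s ∧ t = r) ∨ (C = par_s a b ∧ t = s),
      ⟨?_, ?_⟩, Or.inl ⟨rfl, rfl⟩, Or.inr ⟨rfl, rfl⟩⟩
    · intro t ht
      rw [hroles] at ht
      simp only [Finset.mem_insert, Finset.mem_singleton] at ht
      rcases ht with rfl | rfl
      · exact ⟨seq_r a b s, Or.inl ⟨rfl, rfl⟩⟩
      · exact ⟨par_s a b, Or.inr ⟨rfl, rfl⟩⟩
    · intro L hne hnd hfin hall
      rw [hroles] at hfin
      rcases conf_pair hrs hnd hfin hall with rfl | rfl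
      · simp only [composeC]
        exact implements_transfer hfa hfb hgr hgs
          (by simp [mapS, mapO, seq_r, par_s, P2, hfa, hfb, hgr, hgs]) check_P2 checkTr_P2
      · simp only [composeC]
        exact implements_transfer hfa hfb hgr hgs
          (by simp [mapS, mapO, seq_r, par_s, P2', hfa, hfb, hgr, hgs]) check_P2' checkTr_P2'
  · -- no conformance relation contains both
    rintro R hCR ⟨h1, h2⟩
    have := hCR.2 [(seq_r a b s, r), (seq_s a b, s)] (by simp) (by simp [hrs])
      (by rw [hroles]; simp)
      (by rintro x hx
          simp only [List.mem_cons, List.mem_singleton, List.not_mem_nil, or_false] at hx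
          rcases hx with rfl | rfl
          exacts [h1, h2])
    simp only [composeC] at this
    exact hnc this.1
end

section
/- Internal choices on outputs can be reduced under the subcontract relation for output persistent contracts: τ;ā_l ⪯ τ;ā_l + τ;b̄_l, for any role l and distinct action names a and b. -/
private lemma reach_trans_s9 {A B C : Sys} (h1 : Reach A B) (h2 : Reach B C) : Reach A C := by
  induction h1 with
  | refl => exact h2
  | step h _ ih => exact Reach.step h (ih h2)

private lemma ostep_tauout {a : AName} {l : Role} {μ : OLabel} {D : Orc}
    (h : OStep (.seq .tau (.out a l)) μ D) :
    μ = .tau ∧ D = .seq .one (.out a l) := by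
  cases h with
  | seqL h' _ => cases h'; exact ⟨rfl, rfl⟩
  | seqTick h' _ => cases h'

private lemma track {a b : AName} {l l' : Role} {S₁ S₂ : Sys} (hr : Reach S₁ S₂) :
    ∀ Q : Sys, S₁ = .par (.atom (.seq .tau (.out a l)) l') Q →
    (∃ Q', S₂ = .par (.atom (.seq .tau (.out a l)) l') Q' ∧
      Reach (.par (.atom (.choice (.seq .tau (.out a l)) (.seq .tau (.out b l))) l') Q)
            (.par (.atom (.choice (.seq .tau (.out a l)) (.seq .tau (.out b l))) l') Q')) ∨
    Reach (.par (.atom (.choice (.seq .tau (.out a l)) (.seq .tau (.out b l))) l') Q) S₂ := by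
  induction hr with
  | refl => intro Q hQ; exact Or.inl ⟨Q, hQ, Reach.refl _⟩
  | @step P P' P'' h hrest ih =>
    intro Q hQ
    subst hQ
    rcases h with htau | ⟨a0, r0, s0, hcomm⟩
    · cases htau with
      | parL hs hne =>
        cases hs with
        | atomTau h' =>
          obtain ⟨_, rfl⟩ := ostep_tauout h'
          have hstepC : SStep
              (Sys.par (.atom (.choice (.seq .tau (.out a l)) (.seq .tau (.out b l))) l') Q) .tau
              (Sys.par (.atom (.seq .one (.out a l)) l') Q) :=
            SStep.parL (SStep.atomTau (OStep.choiceL (OStep.seqL OStep.tau (by simp)))) (by simp)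
          exact Or.inr (Reach.step (Or.inl hstepC) hrest)
      | parR hq hne =>
        rcases ih _ rfl with ⟨Q', rfl, hrr⟩ | hrr
        · exact Or.inl ⟨Q', rfl, Reach.step (Or.inl (SStep.parR hq (by simp))) hrr⟩
        · exact Or.inr (Reach.step (Or.inl (SStep.parR hq (by simp))) hrr)
    · cases hcomm with
      | parL hs hne =>
        cases hs
      | parR hq hne =>
        rcases ih _ rfl with ⟨Q', rfl, hrr⟩ | hrr
        · exact Or.inl ⟨Q', rfl, Reach.step (Or.inr ⟨a0, r0, s0, SStep.parR hq (by simp)⟩) hrr⟩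
        · exact Or.inr (Reach.step (Or.inr ⟨a0, r0, s0, SStep.parR hq (by simp)⟩) hrr)
      | commLR hs hq =>
        cases hs with
        | atomOut h' => obtain ⟨h1, _⟩ := ostep_tauout h'; cases h1
      | commRL hs hq =>
        cases hs with
        | atomInp h' => obtain ⟨h1, _⟩ := ostep_tauout h'; cases h1

/-- Internal choices on outputs can be reduced under the
subcontract relation for output persistent contracts:
`τ;ā_l ⪯ τ;ā_l + τ;b̄_l` for any role `l` and distinct names `a`, `b`. -/
theorem output_choice_reduction (a b : AName) (l : Role) (hab : a ≠ b) :
    Subcontract (.seq .tau (.out a l))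
      (.choice (.seq .tau (.out a l)) (.seq .tau (.out b l))) := by
  intro l' hl' P hOP hWF hlP hC P₁ hreach
  rcases track (b := b) hreach P rfl with ⟨Q, rfl, hrr⟩ | hrr
  · have hstep : SStep (Sys.par (.atom (.seq .tau (.out a l)) l') Q) .tau
        (Sys.par (.atom (.seq .one (.out a l)) l') Q) :=
      SStep.parL (SStep.atomTau (OStep.seqL OStep.tau (by simp))) (by simp)
    have hstepC : SStep
        (Sys.par (.atom (.choice (.seq .tau (.out a l)) (.seq .tau (.out b l))) l') Q) .tau
        (Sys.par (.atom (.seq .one (.out a l)) l') Q) :=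
      SStep.parL (SStep.atomTau (OStep.choiceL (OStep.seqL OStep.tau (by simp)))) (by simp)
    obtain ⟨P₂, hr2, ht2⟩ := hC _ (reach_trans_s9 hrr (Reach.step (Or.inl hstepC) (Reach.refl _)))
    exact ⟨P₂, Reach.step (Or.inl hstep) hr2, ht2⟩
  · exact hC P₁ hrr
end
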